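/- arXiv:1901.06835 — 7 statements merged into one kernel-verified Lean document; each statement's English description precedes it below -/
import Mathlib

section
/- Let 0 ≤ α < n, 0 < β < 1, 0 < α+β < n, and let b ∈ Λ̇_β(ℝⁿ) with b ≥ 0. Then for every x ∈ ℝⁿ with M_α(f)(x) < ∞, one has |b(x)·M_α(f)(x) − M_α(bf)(x)| ≤ ‖b‖_{Λ̇_β} · M_{α+β}(f)(x). -/
open MeasureTheory ENNReal Set

noncomputable section

/-- An axis-parallel (closed) cube in `ℝⁿ`. -/
def IsCube (n : ℕ) (Q : Set (Fin n → ℝ)) : Prop :=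
  ∃ (c : Fin n → ℝ) (h : ℝ), 0 < h ∧ Q = Set.univ.pi fun i => Set.Icc (c i) (c i + h)

/-- The fractional maximal function `M_γ f (x) = sup_{Q ∋ x} |Q|^{γ/n-1} ∫_Q |f|`. -/
def fracMax (n : ℕ) (γ : ℝ) (f : (Fin n → ℝ) → ℝ) (x : Fin n → ℝ) : ℝ≥0∞ :=
  ⨆ (Q : Set (Fin n → ℝ)) (_ : IsCube n Q) (_ : x ∈ Q),
    volume Q ^ (γ / n - 1) * ∫⁻ y in Q, ‖f y‖₊

/-- The local fractional maximal function relative to a cube `Q₀`. -/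
def localFracMax (n : ℕ) (γ : ℝ) (Q₀ : Set (Fin n → ℝ)) (f : (Fin n → ℝ) → ℝ)
    (x : Fin n → ℝ) : ℝ≥0∞ :=
  ⨆ (Q : Set (Fin n → ℝ)) (_ : IsCube n Q) (_ : x ∈ Q) (_ : Q ⊆ Q₀),
    volume Q ^ (γ / n - 1) * ∫⁻ y in Q, ‖f y‖₊

/-- The maximal commutator `M_{α,b}`. -/
def maxComm (n : ℕ) (α : ℝ) (b f : (Fin n → ℝ) → ℝ) (x : Fin n → ℝ) : ℝ≥0∞ :=
  ⨆ (Q : Set (Fin n → ℝ)) (_ : IsCube n Q) (_ : x ∈ Q),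
    volume Q ^ (α / n - 1) * ∫⁻ y in Q, (‖b x - b y‖₊ : ℝ≥0∞) * ‖f y‖₊

/-- The nonlinear commutator `[b, M_α](f) = b · M_α(f) - M_α(b f)`. -/
def ncomm (n : ℕ) (α : ℝ) (b f : (Fin n → ℝ) → ℝ) (x : Fin n → ℝ) : ℝ :=
  b x * (fracMax n α f x).toReal - (fracMax n α (fun y => b y * f y) x).toReal

/-- Average of `b` over `Q`. -/
def cubeAvg (n : ℕ) (Q : Set (Fin n → ℝ)) (b : (Fin n → ℝ) → ℝ) : ℝ :=
  (volume Q).toReal⁻¹ * ∫ x in Q, b x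

/- ---------- auxiliary lemmas ---------- -/

lemma IsCube.measurableSet {n : ℕ} {Q : Set (Fin n → ℝ)} (hQ : IsCube n Q) :
    MeasurableSet Q := by
  obtain ⟨c, h, _, rfl⟩ := hQ
  exact MeasurableSet.univ_pi fun i => measurableSet_Icc

lemma le_fracMax {n : ℕ} {γ : ℝ} {Q : Set (Fin n → ℝ)} (hQ : IsCube n Q)
    {x : Fin n → ℝ} (hx : x ∈ Q) (f : (Fin n → ℝ) → ℝ) :
    volume Q ^ (γ / n - 1) * ∫⁻ y in Q, ‖f y‖₊ ≤ fracMax n γ f x :=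
  le_iSup_of_le Q <| le_iSup_of_le hQ <| le_iSup_of_le hx le_rfl

lemma cube_volume {n : ℕ} (c : Fin n → ℝ) {h : ℝ} (hh : 0 < h) :
    volume (Set.univ.pi fun i => Set.Icc (c i) (c i + h)) = ENNReal.ofReal h ^ n := by
  rw [volume_pi_pi]
  simp [Real.volume_Icc]

lemma cube_dist_le {n : ℕ} {c : Fin n → ℝ} {h : ℝ} (hh : 0 < h)
    {x y : Fin n → ℝ} (hx : x ∈ Set.univ.pi fun i => Set.Icc (c i) (c i + h))
    (hy : y ∈ Set.univ.pi fun i => Set.Icc (c i) (c i + h)) : dist x y ≤ h := by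
  rw [dist_pi_le_iff hh.le]
  intro i
  have h1 := hx i (Set.mem_univ i)
  have h2 := hy i (Set.mem_univ i)
  simp only [Set.mem_Icc] at h1 h2
  rw [Real.dist_eq, abs_sub_le_iff]
  constructor <;> linarith

lemma pow_algebra {n : ℕ} (hn : 0 < n) {h : ℝ} (hh : 0 < h) (α β : ℝ) :
    (ENNReal.ofReal h ^ n) ^ (α / n - 1) * ENNReal.ofReal (h ^ β)
      = (ENNReal.ofReal h ^ n) ^ ((α + β) / n - 1) := by
  have h0 : ENNReal.ofReal h ≠ 0 := by
    simp [ENNReal.ofReal_eq_zero, not_le, hh]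
  have ht : ENNReal.ofReal h ≠ ⊤ := ENNReal.ofReal_ne_top
  have hn' : (n : ℝ) ≠ 0 := Nat.cast_ne_zero.mpr hn.ne'
  rw [← ENNReal.ofReal_rpow_of_pos hh (p := β), ← ENNReal.rpow_natCast (ENNReal.ofReal h) n,
    ← ENNReal.rpow_mul, ← ENNReal.rpow_mul, ← ENNReal.rpow_add _ _ h0 ht]
  congr 1
  field_simp
  ring

/-- The key estimate: the commutator term over a single cube is bounded by
`L` times the `(α+β)`-fractional maximal function. -/
lemma comm_term_le {n : ℕ} (hn : 0 < n) {α β L : ℝ} (hβ0 : 0 < β) (hL : 0 ≤ L)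
    {b f : (Fin n → ℝ) → ℝ}
    (hb : ∀ x y, |b x - b y| ≤ L * dist x y ^ β)
    {Q : Set (Fin n → ℝ)} (hQ : IsCube n Q) {x : Fin n → ℝ} (hx : x ∈ Q) :
    volume Q ^ (α / n - 1) * ∫⁻ y in Q, (‖b x - b y‖₊ : ℝ≥0∞) * ‖f y‖₊
      ≤ ENNReal.ofReal L * fracMax n (α + β) f x := by
  obtain ⟨c, h, hh, rfl⟩ := hQ
  set Q := Set.univ.pi fun i => Set.Icc (c i) (c i + h) with hQdef
  have hmeas : MeasurableSet Q := MeasurableSet.univ_pi fun i => measurableSet_Icc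
  have hint : ∫⁻ y in Q, (‖b x - b y‖₊ : ℝ≥0∞) * ‖f y‖₊
      ≤ ENNReal.ofReal (L * h ^ β) * ∫⁻ y in Q, ‖f y‖₊ := by
    rw [← lintegral_const_mul' _ _ ENNReal.ofReal_ne_top]
    refine setLIntegral_mono' hmeas fun y hy => ?_
    have hd : dist x y ≤ h := cube_dist_le hh hx hy
    have h1 : |b x - b y| ≤ L * h ^ β := by
      refine (hb x y).trans ?_
      have : dist x y ^ β ≤ h ^ β :=
        Real.rpow_le_rpow dist_nonneg hd hβ0.le
      exact mul_le_mul_of_nonneg_left this hL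
    gcongr
    rw [← enorm_eq_nnnorm, Real.enorm_eq_ofReal_abs]
    exact ENNReal.ofReal_le_ofReal h1
  calc volume Q ^ (α / n - 1) * ∫⁻ y in Q, (‖b x - b y‖₊ : ℝ≥0∞) * ‖f y‖₊
      ≤ volume Q ^ (α / n - 1) * (ENNReal.ofReal (L * h ^ β) * ∫⁻ y in Q, ‖f y‖₊) := by
        gcongr
    _ = ENNReal.ofReal L * (volume Q ^ ((α + β) / n - 1) * ∫⁻ y in Q, ‖f y‖₊) := by
        rw [ENNReal.ofReal_mul hL, cube_volume c hh,
          ← mul_assoc, ← mul_assoc, mul_comm (_ ^ (α / n - 1)) (ENNReal.ofReal L),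
          mul_assoc (ENNReal.ofReal L), pow_algebra hn hh α β, mul_assoc]
    _ ≤ ENNReal.ofReal L * fracMax n (α + β) f x := by
        gcongr
        exact le_fracMax ⟨c, h, hh, rfl⟩ hx f

theorem stmt2 (n : ℕ) (α β L : ℝ) (hα : 0 ≤ α) (hαn : α < n)
    (hβ0 : 0 < β) (hβ1 : β < 1) (hαβ0 : 0 < α + β) (hαβn : α + β < n)
    (b f : (Fin n → ℝ) → ℝ) (hf : LocallyIntegrable f volume)
    (hb : ∀ x y, |b x - b y| ≤ L * dist x y ^ β) (hb0 : ∀ x, 0 ≤ b x)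
    (x : Fin n → ℝ) (hfin : fracMax n α f x ≠ ⊤) :
    ENNReal.ofReal
        |b x * (fracMax n α f x).toReal - (fracMax n α (fun y => b y * f y) x).toReal|
      ≤ ENNReal.ofReal L * fracMax n (α + β) f x := by
  have hn : 0 < n := by
    rcases Nat.eq_zero_or_pos n with h | h
    · exfalso; rw [h] at hαn; push_cast at hαn; linarith
    · exact h
  -- L ≥ 0
  have hL : 0 ≤ L := by
    have hne : (0 : Fin n → ℝ) ≠ fun _ => 1 := by
      intro hcontra
      have := congrFun hcontra ⟨0, hn⟩
      simp at this
    have hd : 0 < dist (0 : Fin n → ℝ) (fun _ => 1) := dist_pos.mpr hne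
    have hp : 0 < dist (0 : Fin n → ℝ) (fun _ => 1) ^ β := Real.rpow_pos_of_pos hd β
    have h2 : 0 ≤ L * dist (0 : Fin n → ℝ) (fun _ => 1) ^ β :=
      le_trans (abs_nonneg _) (hb 0 _)
    nlinarith
  -- continuity of b
  have hbc : Continuous b := by
    have : HolderWith L.toNNReal β.toNNReal b := by
      intro u v
      rw [edist_dist, edist_dist, Real.dist_eq]
      rcases eq_or_lt_of_le (dist_nonneg (x := u) (y := v)) with hd | hd
      · have : u = v := by rwa [eq_comm, dist_eq_zero] at hd
        simp [this]
      · calc ENNReal.ofReal |b u - b v| ≤ ENNReal.ofReal (L * dist u v ^ β) :=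
              ENNReal.ofReal_le_ofReal (hb u v)
          _ = ENNReal.ofReal L * ENNReal.ofReal (dist u v ^ β) := ENNReal.ofReal_mul hL
          _ = (L.toNNReal : ℝ≥0∞) * ENNReal.ofReal (dist u v) ^ (β.toNNReal : ℝ) := by
              rw [ENNReal.ofReal_rpow_of_pos hd, Real.coe_toNNReal β hβ0.le]
              rfl
    exact this.continuous (by simpa using hβ0)
  have hfm : AEMeasurable f volume := hf.aestronglyMeasurable.aemeasurable
  set F := fracMax n α f x with hF
  set G := fracMax n α (fun y => b y * f y) x with hG
  set K := ENNReal.ofReal L * fracMax n (α + β) f x with hK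
  -- pointwise aux bounds
  have hptA : ∀ y, ENNReal.ofReal (b x) * (‖f y‖₊ : ℝ≥0∞)
      ≤ (‖b x - b y‖₊ : ℝ≥0∞) * ‖f y‖₊ + ‖b y * f y‖₊ := fun y => by
    have h1 : ENNReal.ofReal (b x) ≤ (‖b x - b y‖₊ : ℝ≥0∞) + ‖b y‖₊ := by
      rw [← enorm_eq_nnnorm, ← enorm_eq_nnnorm, Real.enorm_eq_ofReal_abs, Real.enorm_eq_ofReal_abs,
        ← ENNReal.ofReal_add (abs_nonneg _) (abs_nonneg _)]
      refine ENNReal.ofReal_le_ofReal ?_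
      calc b x = (b x - b y) + b y := by ring
        _ ≤ |b x - b y| + |b y| := add_le_add (le_abs_self _) (le_abs_self _)
    calc ENNReal.ofReal (b x) * (‖f y‖₊ : ℝ≥0∞)
        ≤ ((‖b x - b y‖₊ : ℝ≥0∞) + ‖b y‖₊) * ‖f y‖₊ := by gcongr
      _ = (‖b x - b y‖₊ : ℝ≥0∞) * ‖f y‖₊ + ‖b y * f y‖₊ := by
          rw [add_mul, nnnorm_mul]; push_cast; ring
  have hptB : ∀ y, (‖b y * f y‖₊ : ℝ≥0∞)
      ≤ (‖b x - b y‖₊ : ℝ≥0∞) * ‖f y‖₊ + ENNReal.ofReal (b x) * ‖f y‖₊ := fun y => by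
    have h1 : (‖b y‖₊ : ℝ≥0∞) ≤ (‖b x - b y‖₊ : ℝ≥0∞) + ENNReal.ofReal (b x) := by
      rw [← enorm_eq_nnnorm, ← enorm_eq_nnnorm, Real.enorm_eq_ofReal_abs, Real.enorm_eq_ofReal_abs,
        ← ENNReal.ofReal_add (abs_nonneg _) (hb0 x)]
      refine ENNReal.ofReal_le_ofReal ?_
      calc |b y| = b y := abs_of_nonneg (hb0 y)
        _ = -(b x - b y) + b x := by ring
        _ ≤ |b x - b y| + b x := by
            refine add_le_add ?_ le_rfl
            exact (neg_le_abs _)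
    calc (‖b y * f y‖₊ : ℝ≥0∞) = (‖b y‖₊ : ℝ≥0∞) * ‖f y‖₊ := by
          rw [nnnorm_mul]; push_cast; ring
      _ ≤ ((‖b x - b y‖₊ : ℝ≥0∞) + ENNReal.ofReal (b x)) * ‖f y‖₊ := by gcongr
      _ = _ := by ring
  -- AEMeasurability of commutator integrand
  have hcm : ∀ Q : Set (Fin n → ℝ), AEMeasurable
      (fun y => (‖b x - b y‖₊ : ℝ≥0∞) * ‖f y‖₊) (volume.restrict Q) := fun Q => by
    refine AEMeasurable.mul ?_ hfm.enorm.restrict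
    exact ((continuous_const.sub hbc).measurable.enorm).aemeasurable
  -- key inequality A
  have hA : ENNReal.ofReal (b x) * F ≤ G + K := by
    rw [hF, fracMax, ENNReal.mul_iSup]
    refine iSup_le fun Q => ?_
    rw [ENNReal.mul_iSup]
    refine iSup_le fun hQ => ?_
    rw [ENNReal.mul_iSup]
    refine iSup_le fun hx' => ?_
    calc ENNReal.ofReal (b x) * (volume Q ^ (α / n - 1) * ∫⁻ y in Q, ‖f y‖₊)
        = volume Q ^ (α / n - 1) * ∫⁻ y in Q, ENNReal.ofReal (b x) * ‖f y‖₊ := by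
          rw [lintegral_const_mul' _ _ ENNReal.ofReal_ne_top]; ring
      _ ≤ volume Q ^ (α / n - 1) *
            ∫⁻ y in Q, ((‖b x - b y‖₊ : ℝ≥0∞) * ‖f y‖₊ + ‖b y * f y‖₊) :=
          mul_le_mul_right (lintegral_mono fun y => hptA y) _
      _ = (volume Q ^ (α / n - 1) * ∫⁻ y in Q, (‖b x - b y‖₊ : ℝ≥0∞) * ‖f y‖₊)
            + volume Q ^ (α / n - 1) * ∫⁻ y in Q, ‖b y * f y‖₊ := by
          rw [lintegral_add_left' (hcm Q)]; ring
      _ ≤ K + G := add_le_add (comm_term_le hn hβ0 hL hb hQ hx') (le_fracMax hQ hx' _)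
      _ = G + K := add_comm _ _
  -- key inequality B
  have hB : G ≤ ENNReal.ofReal (b x) * F + K := by
    rw [hG, fracMax]
    refine iSup_le fun Q => iSup_le fun hQ => iSup_le fun hx' => ?_
    calc volume Q ^ (α / n - 1) * ∫⁻ y in Q, ‖b y * f y‖₊
        ≤ volume Q ^ (α / n - 1) *
            ∫⁻ y in Q, ((‖b x - b y‖₊ : ℝ≥0∞) * ‖f y‖₊ + ENNReal.ofReal (b x) * ‖f y‖₊) :=
          mul_le_mul_right (lintegral_mono fun y => hptB y) _
      _ = (volume Q ^ (α / n - 1) * ∫⁻ y in Q, (‖b x - b y‖₊ : ℝ≥0∞) * ‖f y‖₊)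
            + ENNReal.ofReal (b x) * (volume Q ^ (α / n - 1) * ∫⁻ y in Q, ‖f y‖₊) := by
          rw [lintegral_add_left' (hcm Q), lintegral_const_mul' _ _ ENNReal.ofReal_ne_top]
          ring
      _ ≤ K + ENNReal.ofReal (b x) * F :=
          add_le_add (comm_term_le hn hβ0 hL hb hQ hx')
            (mul_le_mul_right (le_fracMax hQ hx' f) _)
      _ = ENNReal.ofReal (b x) * F + K := add_comm _ _
  -- conclude
  rcases eq_or_ne K ⊤ with hKt | hKt
  · rw [hKt]; exact le_top
  have hGt : G ≠ ⊤ := by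
    intro hGtop
    rw [hGtop] at hB
    exact (ENNReal.add_ne_top.mpr ⟨ENNReal.mul_ne_top ENNReal.ofReal_ne_top hfin, hKt⟩)
      (top_le_iff.mp hB)
  have hbF : (ENNReal.ofReal (b x) * F).toReal = b x * F.toReal := by
    rw [ENNReal.toReal_mul, ENNReal.toReal_ofReal (hb0 x)]
  have hu : b x * F.toReal ≤ G.toReal + K.toReal := by
    have := ENNReal.toReal_mono (by
      exact ENNReal.add_ne_top.mpr ⟨hGt, hKt⟩) hA
    rwa [hbF, ENNReal.toReal_add hGt hKt] at this
  have hv : G.toReal ≤ b x * F.toReal + K.toReal := by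
    have := ENNReal.toReal_mono (by
      exact ENNReal.add_ne_top.mpr ⟨ENNReal.mul_ne_top ENNReal.ofReal_ne_top hfin, hKt⟩) hB
    rwa [ENNReal.toReal_add (ENNReal.mul_ne_top ENNReal.ofReal_ne_top hfin) hKt, hbF] at this
  have habs : |b x * F.toReal - G.toReal| ≤ K.toReal := abs_sub_le_iff.mpr ⟨by linarith, by linarith⟩
  calc ENNReal.ofReal |b x * F.toReal - G.toReal| ≤ ENNReal.ofReal K.toReal :=
        ENNReal.ofReal_le_ofReal habs
    _ = K := ENNReal.ofReal_toReal hKt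
end
end

section
/- Let 0 < α < n, 0 < β < 1, 0 < α+β < n, 1 < p < n/(α+β), 1/q = 1/p − (α+β)/n. If the maximal commutator M_{α,b} is bounded from L^p(ℝⁿ) to L^q(ℝⁿ), then sup_Q |Q|^{−β/n} (|Q|^{−1} ∫_Q |b(x) − b_Q|^q dx)^{1/q} < ∞, where the supremum is over all axis-parallel cubes Q and b_Q = |Q|^{−1}∫_Q b. -/
open MeasureTheory ENNReal Set

noncomputable section

theorem stmt6 (n : ℕ) (α β p q : ℝ) (hα0 : 0 < α) (hαn : α < n)
    (hβ0 : 0 < β) (hβ1 : β < 1) (hαβn : α + β < n)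
    (hp1 : 1 < p) (hp2 : p < n / (α + β)) (hq : 1 / q = 1 / p - (α + β) / n)
    (b : (Fin n → ℝ) → ℝ) (hb : LocallyIntegrable b volume)
    (hbound : ∃ K : ℝ≥0∞, K ≠ ⊤ ∧ ∀ f : (Fin n → ℝ) → ℝ,
      MemLp f (ENNReal.ofReal p) volume →
      (∫⁻ x, maxComm n α b f x ^ q) ^ (1 / q)
        ≤ K * eLpNorm f (ENNReal.ofReal p) volume) :
    ∃ C : ℝ≥0∞, C ≠ ⊤ ∧ ∀ Q : Set (Fin n → ℝ), IsCube n Q →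
      volume Q ^ (-(β / (n : ℝ))) *
        ((volume Q)⁻¹ * ∫⁻ x in Q, ENNReal.ofReal |b x - cubeAvg n Q b| ^ q) ^ (1 / q)
      ≤ C := by 
  classical
  obtain ⟨K, hKt, hKb⟩ := hbound
  have hn : (0:ℝ) < n := lt_trans hα0 hαn
  have hp0 : (0:ℝ) < p := lt_trans one_pos hp1
  have hαβ : (0:ℝ) < α + β := by linarith
  have hq0 : 0 < 1 / q := by
    rw [hq]
    have h1 : p * (α + β) < n := by
      have := (lt_div_iff₀ hαβ).mp hp2
      linarith
    rw [sub_pos, div_lt_div_iff₀ hn hp0]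
    linarith
  have hq0' : (0:ℝ) < q := one_div_pos.mp hq0
  refine ⟨K, hKt, ?_⟩
  intro Q hQ
  obtain ⟨c, h, hh, hQdef⟩ := hQ
  have hQcube : IsCube n Q := ⟨c, h, hh, hQdef⟩
  have hQm : MeasurableSet Q := by
    rw [hQdef]; exact MeasurableSet.univ_pi fun i => measurableSet_Icc
  have hQc : IsCompact Q := by
    rw [hQdef]; exact isCompact_univ_pi fun i => isCompact_Icc
  have hVcomp : volume Q = ENNReal.ofReal h ^ n := by
    rw [hQdef, volume_pi_pi]
    simp [Real.volume_Icc]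
  have hV0 : volume Q ≠ 0 := by
    rw [hVcomp]
    exact pow_ne_zero _ (ENNReal.ofReal_pos.mpr hh).ne'
  have hVt : volume Q ≠ ⊤ := by
    rw [hVcomp]
    exact ENNReal.pow_ne_top ENNReal.ofReal_ne_top
  set V := volume Q with hVdef
  have hauxt : ∀ W : ℝ≥0∞, W ≠ 0 → W ≠ ⊤ → ∀ r : ℝ, W ^ r ≠ ⊤ := by
    intro W hW0 hWt r hc
    rcases ENNReal.rpow_eq_top_iff.mp hc with ⟨h1, _⟩ | ⟨h1, _⟩
    exacts [hW0 h1, hWt h1]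
  have haux0 : ∀ r : ℝ, V ^ r ≠ 0 := fun r =>
    (ENNReal.rpow_pos (pos_iff_ne_zero.mpr hV0) hVt).ne'
  set f : (Fin n → ℝ) → ℝ := Q.indicator fun _ => (1:ℝ) with hfdef
  have hf : MemLp f (ENNReal.ofReal p) volume := memLp_indicator_const _ hQm 1 (Or.inr hVt)
  have hfs : eLpNorm f (ENNReal.ofReal p) volume = V ^ (1/p) := by
    rw [hfdef, eLpNorm_indicator_const hQm (ENNReal.ofReal_pos.mpr hp0).ne' ENNReal.ofReal_ne_top]
    simp [ENNReal.toReal_ofReal hp0.le]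
    rfl
  -- global bound on the maximal commutator of the indicator
  have hM : ∫⁻ x, maxComm n α b f x ^ q ≤ K ^ q * V ^ (q / p) := by
    have h2 := ENNReal.rpow_le_rpow (hKb f hf) hq0'.le
    rw [← ENNReal.rpow_mul, one_div_mul_cancel hq0'.ne', ENNReal.rpow_one, hfs,
      ENNReal.mul_rpow_of_nonneg _ _ hq0'.le, ← ENNReal.rpow_mul, one_div_mul_eq_div] at h2
    exact h2
  -- pointwise bound
  have key : ∀ x ∈ Q, ENNReal.ofReal |b x - cubeAvg n Q b|
      ≤ V ^ (-(α / (n:ℝ))) * maxComm n α b f x := by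
    intro x hx
    have ht0 : 0 < V.toReal := ENNReal.toReal_pos hV0 hVt
    have hbi : IntegrableOn b Q volume := hb.integrableOn_isCompact hQc
    have hconst : IntegrableOn (fun _ => b x) Q volume :=
      integrableOn_const hVt
    have hsub : IntegrableOn (fun y => b x - b y) Q volume := hconst.sub hbi
    have hA : b x - cubeAvg n Q b = V.toReal⁻¹ * ∫ y in Q, (b x - b y) := by
      rw [integral_sub hconst hbi, integral_const, cubeAvg]
      simp only [measureReal_def, Measure.restrict_apply_univ, smul_eq_mul, ← hVdef]
      field_simp
    have hB : |b x - cubeAvg n Q b| ≤ V.toReal⁻¹ * ∫ y in Q, |b x - b y| := by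
      rw [hA, abs_mul, abs_inv, abs_of_pos ht0]
      have := norm_integral_le_integral_norm (μ := volume.restrict Q) (f := fun y => b x - b y)
      simp only [Real.norm_eq_abs] at this
      exact mul_le_mul_of_nonneg_left this (inv_nonneg.mpr ht0.le)
    calc ENNReal.ofReal |b x - cubeAvg n Q b|
        ≤ ENNReal.ofReal (V.toReal⁻¹ * ∫ y in Q, |b x - b y|) := ENNReal.ofReal_le_ofReal hB
      _ = V⁻¹ * ENNReal.ofReal (∫ y in Q, |b x - b y|) := by
          rw [ENNReal.ofReal_mul (inv_nonneg.mpr ht0.le), ENNReal.ofReal_inv_of_pos ht0,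
            ENNReal.ofReal_toReal hVt]
      _ = V⁻¹ * ∫⁻ y in Q, ENNReal.ofReal |b x - b y| := by
          rw [ofReal_integral_eq_lintegral_ofReal hsub.abs (ae_of_all _ fun y => abs_nonneg _)]
      _ = V⁻¹ * ∫⁻ y in Q, (‖b x - b y‖₊ : ℝ≥0∞) * ‖f y‖₊ := by
          congr 1
          refine setLIntegral_congr_fun hQm (fun y hy => ?_)
          rw [hfdef, Set.indicator_of_mem hy]
          simp [Real.enorm_eq_ofReal_abs]
          exact (Real.enorm_eq_ofReal_abs _).symm
      _ = V ^ (-(α / (n:ℝ))) * (V ^ (α / (n:ℝ) - 1) * ∫⁻ y in Q, (‖b x - b y‖₊ : ℝ≥0∞) * ‖f y‖₊) := by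
          rw [← mul_assoc, ← ENNReal.rpow_add _ _ hV0 hVt]
          congr 2
          rw [show -(α / (n:ℝ)) + (α / (n:ℝ) - 1) = (-1 : ℝ) by ring, ENNReal.rpow_neg_one]
      _ ≤ V ^ (-(α / (n:ℝ))) * maxComm n α b f x := by
          refine mul_le_mul_right ?_ _
          exact le_iSup_of_le Q (le_iSup_of_le hQcube (le_iSup_of_le hx le_rfl))
  -- integrate the pointwise bound
  have hI : ∫⁻ x in Q, ENNReal.ofReal |b x - cubeAvg n Q b| ^ q
      ≤ (V ^ (-(α / (n:ℝ)))) ^ q * (K ^ q * V ^ (q / p)) := by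
    calc ∫⁻ x in Q, ENNReal.ofReal |b x - cubeAvg n Q b| ^ q
        ≤ ∫⁻ x in Q, (V ^ (-(α / (n:ℝ))) * maxComm n α b f x) ^ q := by
          refine lintegral_mono_ae ?_
          rw [ae_restrict_iff' hQm]
          exact ae_of_all _ fun x hx => ENNReal.rpow_le_rpow (key x hx) hq0'.le
      _ = (V ^ (-(α / (n:ℝ)))) ^ q * ∫⁻ x in Q, maxComm n α b f x ^ q := by
          simp_rw [ENNReal.mul_rpow_of_nonneg _ _ hq0'.le]
          rw [lintegral_const_mul' _ _ (hauxt _ (haux0 _) (hauxt V hV0 hVt _) q)]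
      _ ≤ (V ^ (-(α / (n:ℝ)))) ^ q * ∫⁻ x, maxComm n α b f x ^ q :=
          mul_le_mul_right (setLIntegral_le_lintegral _ _) _
      _ ≤ (V ^ (-(α / (n:ℝ)))) ^ q * (K ^ q * V ^ (q / p)) := mul_le_mul_right hM _
  -- final exponent computation
  have hVpow : ∀ r s : ℝ, V ^ r * V ^ s = V ^ (r + s) :=
    fun r s => (ENNReal.rpow_add r s hV0 hVt).symm
  calc V ^ (-(β / (n:ℝ))) * (V⁻¹ * ∫⁻ x in Q, ENNReal.ofReal |b x - cubeAvg n Q b| ^ q) ^ (1/q)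
      ≤ V ^ (-(β / (n:ℝ))) * (V⁻¹ * ((V ^ (-(α / (n:ℝ)))) ^ q * (K ^ q * V ^ (q / p)))) ^ (1/q) := by
        gcongr
    _ = K := by
        rw [← ENNReal.rpow_neg_one V, ← ENNReal.rpow_mul]
        rw [show V ^ (-1:ℝ) * (V ^ (-(α / (n:ℝ)) * q) * (K ^ q * V ^ (q / p)))
            = (V ^ (-1:ℝ) * V ^ (-(α / (n:ℝ)) * q) * V ^ (q / p)) * K ^ q by ring]
        rw [hVpow, hVpow, ENNReal.mul_rpow_of_nonneg _ _ hq0.le, ← ENNReal.rpow_mul,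
          ← ENNReal.rpow_mul]
        rw [show q * (1/q) = 1 by field_simp, ENNReal.rpow_one, ← mul_assoc, hVpow]
        rw [show -(β / (n:ℝ)) + (-1 + -(α / (n:ℝ)) * q + q / p) * (1/q) = 0 by
          have hq' : q ≠ 0 := hq0'.ne'
          have hn' : (n:ℝ) ≠ 0 := hn.ne'
          have hp' : p ≠ 0 := hp0.ne'
          field_simp at hq ⊢
          nlinarith [hq]]
        rw [ENNReal.rpow_zero, one_mul]
end
end

section
/- Let 0 < γ < n, 0 ≤ β < 1, and let b be locally integrable. Then for every cube Q: (1/|Q|^{1+β/n}) ∫_Q |b(x) − b_Q| dx ≤ (2/|Q|^{1+β/n}) ∫_Q |b(x) − |Q|^{−γ/n} M_{γ,Q}(b)(x)| dx. -/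
open MeasureTheory ENNReal Set

noncomputable section

theorem stmt8 (n : ℕ) (γ β : ℝ) (hγ0 : 0 < γ) (hγn : γ < n)
    (hβ0 : 0 ≤ β) (hβ1 : β < 1)
    (b : (Fin n → ℝ) → ℝ) (hb : LocallyIntegrable b volume)
    (Q : Set (Fin n → ℝ)) (hQ : IsCube n Q) :
    volume Q ^ (-(1 + β / (n : ℝ))) * ∫⁻ x in Q, ENNReal.ofReal |b x - cubeAvg n Q b|
      ≤ 2 * (volume Q ^ (-(1 + β / (n : ℝ))) *
          ∫⁻ x in Q, ((b x : EReal) -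
            ((volume Q ^ (-(γ / (n : ℝ))) * localFracMax n γ Q b x : ℝ≥0∞) : EReal)).abs) := by
  
  have hQ' := hQ
  obtain ⟨c, h, hh, hQeq⟩ := hQ
  have hQm : MeasurableSet Q := by
    rw [hQeq]; exact MeasurableSet.univ_pi fun i => measurableSet_Icc
  have hQc : IsCompact Q := by
    rw [hQeq]; exact isCompact_univ_pi fun i => isCompact_Icc
  have hv0 : volume Q ≠ 0 := by
    rw [hQeq, volume_pi_pi]
    simp [Real.volume_Icc, (ENNReal.ofReal_pos.2 hh).ne', Finset.prod_eq_pow_card]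
  have hvt : volume Q ≠ ⊤ := by
    rw [hQeq, volume_pi_pi]
    simp [Real.volume_Icc, Finset.prod_eq_pow_card, ENNReal.pow_ne_top ENNReal.ofReal_ne_top]
  set A := cubeAvg n Q b with hA
  set m : (Fin n → ℝ) → ℝ≥0∞ :=
    fun x => volume Q ^ (-(γ / (n : ℝ))) * localFracMax n γ Q b x with hm
  have hbi : IntegrableOn b Q volume := hb.integrableOn_isCompact hQc
  have htR : (volume Q).toReal ≠ 0 := (ENNReal.toReal_pos hv0 hvt).ne'
  have hmkey : ∀ x ∈ Q, ENNReal.ofReal A ≤ m x := by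
    intro x hx
    have h1 : volume Q ^ (γ / (n : ℝ) - 1) * ∫⁻ y in Q, ‖b y‖₊ ≤ localFracMax n γ Q b x :=
      le_iSup_of_le Q <| le_iSup_of_le hQ' <| le_iSup_of_le hx <|
        le_iSup_of_le subset_rfl le_rfl
    have h2 : (volume Q)⁻¹ * ∫⁻ y in Q, ‖b y‖₊ ≤ m x := by
      calc (volume Q)⁻¹ * ∫⁻ y in Q, ‖b y‖₊
          = volume Q ^ (-(γ / (n : ℝ))) * (volume Q ^ (γ / (n : ℝ) - 1) * ∫⁻ y in Q, ‖b y‖₊) := by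
            rw [← mul_assoc, ← ENNReal.rpow_add _ _ hv0 hvt]
            have hexp : -(γ / (n : ℝ)) + (γ / (n : ℝ) - 1) = -1 := by ring
            rw [hexp, ENNReal.rpow_neg_one]
        _ ≤ m x := mul_le_mul_right h1 _
    refine le_trans ?_ h2
    have habs : A ≤ (volume Q).toReal⁻¹ * ∫ y in Q, |b y| := by
      calc A ≤ |A| := le_abs_self A
        _ = (volume Q).toReal⁻¹ * |∫ y in Q, b y| := by
            rw [hA, cubeAvg, abs_mul, abs_of_nonneg (inv_nonneg.2 ENNReal.toReal_nonneg)]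
        _ ≤ (volume Q).toReal⁻¹ * ∫ y in Q, |b y| :=
            mul_le_mul_of_nonneg_left
              (by simpa [Real.norm_eq_abs] using
                norm_integral_le_integral_norm (μ := volume.restrict Q) b)
              (inv_nonneg.2 ENNReal.toReal_nonneg)
    calc ENNReal.ofReal A ≤ ENNReal.ofReal ((volume Q).toReal⁻¹ * ∫ y in Q, |b y|) :=
          ENNReal.ofReal_le_ofReal habs
      _ = (volume Q)⁻¹ * ∫⁻ y in Q, ‖b y‖₊ := by
          rw [ENNReal.ofReal_mul (inv_nonneg.2 ENNReal.toReal_nonneg),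
            ENNReal.ofReal_inv_of_pos (ENNReal.toReal_pos hv0 hvt),
            ENNReal.ofReal_toReal hvt]
          congr 1
          simp only [← enorm_eq_nnnorm]; rw [← MeasureTheory.ofReal_integral_norm_eq_lintegral_enorm hbi]
          simp [Real.norm_eq_abs]
  have hpt : ∀ x ∈ Q, ENNReal.ofReal (A - b x) ≤ ((b x : EReal) - ((m x : ℝ≥0∞) : EReal)).abs := by
    intro x hx
    rcases eq_or_ne (m x) ⊤ with hmx | hmx
    · rw [hmx, EReal.coe_ennreal_top, EReal.sub_top, EReal.abs_bot]; exact le_top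
    · have hco : ((m x : ℝ≥0∞) : EReal) = (((m x).toReal : ℝ) : EReal) := by
        conv_lhs => rw [← ENNReal.ofReal_toReal hmx]
        rw [EReal.coe_ennreal_ofReal, max_eq_left ENNReal.toReal_nonneg]
      rw [hco, ← EReal.coe_sub, EReal.abs_def]
      apply ENNReal.ofReal_le_ofReal
      have hAr : A ≤ (m x).toReal := by
        have hk := hmkey x hx
        rcases le_or_gt A 0 with h0 | h0
        · exact h0.trans ENNReal.toReal_nonneg
        · have := (ENNReal.toReal_le_toReal ENNReal.ofReal_ne_top hmx).2 hk
          rwa [ENNReal.toReal_ofReal h0.le] at this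
      calc A - b x ≤ (m x).toReal - b x := by linarith
        _ ≤ |b x - (m x).toReal| := by rw [abs_sub_comm]; exact le_abs_self _
  have hconst : IntegrableOn (fun _ => A) Q volume := integrableOn_const hvt
  have hmax : Integrable (fun x => max (A - b x) 0) (volume.restrict Q) :=
    (hconst.sub hbi).pos_part
  have hzero : ∫ x in Q, (b x - A) = 0 := by
    rw [integral_sub hbi hconst, setIntegral_const, smul_eq_mul, measureReal_def, hA, cubeAvg,
      ← mul_assoc, mul_inv_cancel₀ htR, one_mul, sub_self]
  have hint : ∫ x in Q, |b x - A| = 2 * ∫ x in Q, max (A - b x) 0 := by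
    have hid : ∀ x, |b x - A| = 2 * max (A - b x) 0 + (b x - A) := by
      intro x; rcases le_total (b x) A with hle | hle
      · rw [abs_of_nonpos (by linarith), max_eq_left (by linarith)]; ring
      · rw [abs_of_nonneg (by linarith), max_eq_right (by linarith)]; ring
    have hsub : Integrable (fun x => b x - A) (volume.restrict Q) := hbi.sub hconst
    simp_rw [hid]
    rw [integral_add (hmax.const_mul 2) hsub, hzero, add_zero, integral_const_mul]
  have hintabs : Integrable (fun x => |b x - A|) (volume.restrict Q) := (hbi.sub hconst).abs
  have main : (∫⁻ x in Q, ENNReal.ofReal |b x - A|) ≤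
      2 * ∫⁻ x in Q, ((b x : EReal) - ((m x : ℝ≥0∞) : EReal)).abs := by
    calc (∫⁻ x in Q, ENNReal.ofReal |b x - A|)
        = ENNReal.ofReal (∫ x in Q, |b x - A|) :=
          (ofReal_integral_eq_lintegral_ofReal hintabs (ae_of_all _ fun x => abs_nonneg _)).symm
      _ = 2 * ENNReal.ofReal (∫ x in Q, max (A - b x) 0) := by
          rw [hint, ENNReal.ofReal_mul (by norm_num), ENNReal.ofReal_ofNat]
      _ = 2 * ∫⁻ x in Q, ENNReal.ofReal (max (A - b x) 0) := by
          rw [ofReal_integral_eq_lintegral_ofReal hmax (ae_of_all _ fun x => le_max_right _ _)]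
      _ = 2 * ∫⁻ x in Q, ENNReal.ofReal (A - b x) := by
          congr 1
          apply lintegral_congr
          intro x
          rcases le_total (A - b x) 0 with hle | hle
          · rw [max_eq_right hle, ENNReal.ofReal_zero, ENNReal.ofReal_of_nonpos hle]
          · rw [max_eq_left hle]
      _ ≤ 2 * ∫⁻ x in Q, ((b x : EReal) - ((m x : ℝ≥0∞) : EReal)).abs :=
          mul_le_mul_right (lintegral_mono_ae ((ae_restrict_iff' hQm).2
            (ae_of_all _ hpt))) 2
  calc volume Q ^ (-(1 + β / (n : ℝ))) * ∫⁻ x in Q, ENNReal.ofReal |b x - A|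
      ≤ volume Q ^ (-(1 + β / (n : ℝ))) *
          (2 * ∫⁻ x in Q, ((b x : EReal) - ((m x : ℝ≥0∞) : EReal)).abs) :=
        mul_le_mul_right main _
    _ = 2 * (volume Q ^ (-(1 + β / (n : ℝ))) *
          ∫⁻ x in Q, ((b x : EReal) - ((m x : ℝ≥0∞) : EReal)).abs) := by ring
end
end

section
/- Let 0 < α < n, 0 < β < 1, with α+β < n, and suppose b ∈ Λ̇_β(ℝⁿ). Then for every cube Q and every x ∈ Q: ||Q|^{−α/n} M_{α,Q}(b)(x) − M_Q(b)(x)| ≤ |Q|^{−α/n}|[|b|,M_α](χ_Q)(x)| + |[|b|,M](χ_Q)(x)|, and consequently (1/|Q|^{1+β/n}) ∫_Q ||Q|^{−α/n} M_{α,Q}(b)(x) − M_Q(b)(x)| dx ≤ C‖b‖_{Λ̇_β} with C independent of Q. -/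
open MeasureTheory ENNReal Set

noncomputable section

section Aux
variable {n : ℕ}

lemma cube_meas {Q : Set (Fin n → ℝ)} (hQ : IsCube n Q) : MeasurableSet Q := by
  obtain ⟨c, h, hh, rfl⟩ := hQ
  exact MeasurableSet.univ_pi fun i => measurableSet_Icc

lemma cube_vol {c : Fin n → ℝ} {h : ℝ} (hh : 0 ≤ h) :
    volume (Set.univ.pi fun i => Set.Icc (c i) (c i + h)) = ENNReal.ofReal h ^ n := by
  rw [volume_pi_pi]
  simp [Real.volume_Icc]

lemma cube_vol_pos {Q : Set (Fin n → ℝ)} (hQ : IsCube n Q) : 0 < volume Q := by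
  obtain ⟨c, h, hh, rfl⟩ := hQ
  rw [cube_vol hh.le]
  exact ENNReal.pow_pos (ENNReal.ofReal_pos.mpr hh) n

lemma cube_vol_ne_top {Q : Set (Fin n → ℝ)} (hQ : IsCube n Q) : volume Q ≠ ⊤ := by
  obtain ⟨c, h, hh, rfl⟩ := hQ
  rw [cube_vol hh.le]
  exact ENNReal.pow_ne_top ENNReal.ofReal_ne_top

lemma rpow_anti {c : ℝ} (hc : c ≤ 0) {a b : ℝ≥0∞} (hab : a ≤ b) : b ^ c ≤ a ^ c := by
  rcases eq_or_lt_of_le hc with rfl | h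
  · simp
  · rw [← neg_neg c, ENNReal.rpow_neg a, ENNReal.rpow_neg b, ENNReal.inv_le_inv]
    exact ENNReal.rpow_le_rpow hab (by linarith)

lemma cube_inter {Q Q' : Set (Fin n → ℝ)} (hQ : IsCube n Q) (hQ' : IsCube n Q') :
    ∃ R, IsCube n R ∧ R ⊆ Q ∧ Q' ∩ Q ⊆ R ∧ volume R ≤ volume Q' := by
  obtain ⟨c, h, hh, rfl⟩ := hQ
  obtain ⟨c', h', hh', rfl⟩ := hQ'
  set s := min h h' with hs
  have hs0 : 0 < s := lt_min hh hh'
  set r : Fin n → ℝ := fun i => min (max (c i) (c' i)) (c i + h - s) with hr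
  refine ⟨Set.univ.pi fun i => Set.Icc (r i) (r i + s), ⟨r, s, hs0, rfl⟩, ?_, ?_, ?_⟩
  · intro z hz
    rw [Set.mem_univ_pi] at hz ⊢
    intro i
    have hzi := hz i
    rw [Set.mem_Icc] at hzi ⊢
    have h1 : c i ≤ r i :=
      le_min (le_max_left _ _) (by have := min_le_left h h'; linarith)
    have h2 : r i ≤ c i + h - s := min_le_right _ _
    exact ⟨by linarith, by linarith⟩
  · rintro y ⟨hy', hy⟩
    rw [Set.mem_univ_pi] at hy hy' ⊢
    intro i
    have h1 := hy i; have h2 := hy' i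
    rw [Set.mem_Icc] at h1 h2 ⊢
    refine ⟨le_trans (min_le_left _ _) (max_le h1.1 h2.1), ?_⟩
    rcases le_total (max (c i) (c' i)) (c i + h - s) with hle | hle
    · have hre : r i = max (c i) (c' i) := min_eq_left hle
      rcases le_total h h' with hhh | hhh
      · have hse : s = h := min_eq_left hhh
        have := le_max_left (c i) (c' i)
        rw [hre]; linarith [h1.2]
      · have hse : s = h' := min_eq_right hhh
        have := le_max_right (c i) (c' i)
        rw [hre]; linarith [h2.2]
    · have hre : r i = c i + h - s := min_eq_right hle
      rw [hre]; linarith [h1.2]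
  · rw [cube_vol hs0.le, cube_vol hh'.le]
    exact pow_le_pow_left' (ENNReal.ofReal_le_ofReal (min_le_right h h')) n

end Aux


section Aux2
variable {n : ℕ}


lemma rpow_sub_one_mul {a : ℝ≥0∞} (ha0 : a ≠ 0) (hat : a ≠ ⊤) (c : ℝ) :
    a ^ (c - 1) * a = a ^ c := by
  have h := (ENNReal.rpow_add (c - 1) 1 ha0 hat).symm
  rw [ENNReal.rpow_one] at h
  rw [h]
  norm_num

lemma lint_ind {Q : Set (Fin n → ℝ)} (hQ : MeasurableSet Q) (b : (Fin n → ℝ) → ℝ)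
    (S : Set (Fin n → ℝ)) :
    ∫⁻ y in S, (‖|b y| * Q.indicator (fun _ => (1 : ℝ)) y‖₊ : ℝ≥0∞)
      = ∫⁻ y in S ∩ Q, (‖b y‖₊ : ℝ≥0∞) := by
  have key : ∀ y, (‖|b y| * Q.indicator (fun _ => (1 : ℝ)) y‖₊ : ℝ≥0∞)
      = Q.indicator (fun y => (‖b y‖₊ : ℝ≥0∞)) y := by
    intro y
    by_cases hy : y ∈ Q <;> simp [Set.indicator, hy]
  simp_rw [key]
  rw [lintegral_indicator hQ, Measure.restrict_restrict hQ, Set.inter_comm]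

lemma lint_ind_one {Q : Set (Fin n → ℝ)} (hQ : MeasurableSet Q) (S : Set (Fin n → ℝ)) :
    ∫⁻ y in S, (‖Q.indicator (fun _ => (1 : ℝ)) y‖₊ : ℝ≥0∞) = volume (Q ∩ S) := by
  have key : ∀ y, (‖Q.indicator (fun _ => (1 : ℝ)) y‖₊ : ℝ≥0∞)
      = Q.indicator (fun _ => (1 : ℝ≥0∞)) y := by
    intro y
    by_cases hy : y ∈ Q <;> simp [Set.indicator, hy]
  simp_rw [key]
  rw [lintegral_indicator hQ, setLIntegral_one, Measure.restrict_apply hQ]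

lemma fracMax_ind (hn : 0 < n) {γ : ℝ} (hγ0 : 0 ≤ γ) (hγn : γ ≤ n)
    {Q : Set (Fin n → ℝ)} {x : Fin n → ℝ} (hQ : IsCube n Q) (hx : x ∈ Q) :
    fracMax n γ (Q.indicator fun _ => (1 : ℝ)) x = volume Q ^ (γ / (n : ℝ)) := by
  have hnR : (0 : ℝ) < n := by exact_mod_cast hn
  have hexp : γ / (n : ℝ) - 1 ≤ 0 := by
    have : γ / (n : ℝ) ≤ 1 := (div_le_one hnR).mpr hγn
    linarith
  have hdiv0 : 0 ≤ γ / (n : ℝ) := div_nonneg hγ0 hnR.le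
  have hV0 : volume Q ≠ 0 := (cube_vol_pos hQ).ne'
  have hVt : volume Q ≠ ⊤ := cube_vol_ne_top hQ
  apply le_antisymm
  · refine iSup_le fun Q' => iSup_le fun hQ' => iSup_le fun hx' => ?_
    rw [lint_ind_one (cube_meas hQ)]
    have ha0 : volume Q' ≠ 0 := (cube_vol_pos hQ').ne'
    have hat : volume Q' ≠ ⊤ := cube_vol_ne_top hQ'
    rcases le_total (volume Q') (volume Q) with hav | hav
    · calc volume Q' ^ (γ / (n : ℝ) - 1) * volume (Q ∩ Q')
          ≤ volume Q' ^ (γ / (n : ℝ) - 1) * volume Q' :=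
            mul_le_mul_right (measure_mono Set.inter_subset_right) _
        _ = volume Q' ^ (γ / (n : ℝ)) := rpow_sub_one_mul ha0 hat _
        _ ≤ volume Q ^ (γ / (n : ℝ)) := ENNReal.rpow_le_rpow hav hdiv0
    · calc volume Q' ^ (γ / (n : ℝ) - 1) * volume (Q ∩ Q')
          ≤ volume Q ^ (γ / (n : ℝ) - 1) * volume Q :=
            mul_le_mul (rpow_anti hexp hav) (measure_mono Set.inter_subset_left)
              zero_le zero_le
        _ = volume Q ^ (γ / (n : ℝ)) := rpow_sub_one_mul hV0 hVt _
  · have hterm : volume Q ^ (γ / (n : ℝ) - 1)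
        * ∫⁻ y in Q, (‖(Q.indicator fun _ => (1 : ℝ)) y‖₊ : ℝ≥0∞)
        = volume Q ^ (γ / (n : ℝ)) := by
      rw [lint_ind_one (cube_meas hQ), Set.inter_self, rpow_sub_one_mul hV0 hVt]
    rw [← hterm]
    exact le_iSup_of_le Q (le_iSup_of_le hQ (le_iSup_of_le hx le_rfl))

lemma fracMax_eq_local {γ : ℝ} (hexp : γ / (n : ℝ) - 1 ≤ 0)
    {Q : Set (Fin n → ℝ)} {x : Fin n → ℝ} (hQ : IsCube n Q) (hx : x ∈ Q)
    (b : (Fin n → ℝ) → ℝ) :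
    fracMax n γ (fun y => |b y| * Q.indicator (fun _ => (1 : ℝ)) y) x
      = localFracMax n γ Q b x := by
  apply le_antisymm
  · refine iSup_le fun Q' => iSup_le fun hQ' => iSup_le fun hx' => ?_
    obtain ⟨R, hR, hRQ, hsub, hvol⟩ := cube_inter hQ hQ'
    have hxR : x ∈ R := hsub ⟨hx', hx⟩
    rw [lint_ind (cube_meas hQ)]
    have h1 : ∫⁻ y in Q' ∩ Q, (‖b y‖₊ : ℝ≥0∞) ≤ ∫⁻ y in R, (‖b y‖₊ : ℝ≥0∞) :=
      lintegral_mono' (Measure.restrict_mono hsub le_rfl) le_rfl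
    calc volume Q' ^ (γ / (n : ℝ) - 1) * ∫⁻ y in Q' ∩ Q, (‖b y‖₊ : ℝ≥0∞)
        ≤ volume R ^ (γ / (n : ℝ) - 1) * ∫⁻ y in R, (‖b y‖₊ : ℝ≥0∞) :=
          mul_le_mul' (rpow_anti hexp hvol) h1
      _ ≤ localFracMax n γ Q b x :=
          le_iSup_of_le R (le_iSup_of_le hR (le_iSup_of_le hxR (le_iSup_of_le hRQ le_rfl)))
  · refine iSup_le fun P => iSup_le fun hP => iSup_le fun hxP => iSup_le fun hPQ => ?_
    have hterm : ∫⁻ y in P, (‖b y‖₊ : ℝ≥0∞)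
        = ∫⁻ y in P, (‖|b y| * Q.indicator (fun _ => (1 : ℝ)) y‖₊ : ℝ≥0∞) := by
      rw [lint_ind (cube_meas hQ), Set.inter_eq_self_of_subset_left hPQ]
    rw [hterm]
    exact le_iSup_of_le P (le_iSup_of_le hP (le_iSup_of_le hxP le_rfl))

lemma localFracMax_le (hn : 0 < n) {γ : ℝ} (hγ0 : 0 ≤ γ) (hγn : γ ≤ n)
    {Q : Set (Fin n → ℝ)} {x : Fin n → ℝ} (hQ : IsCube n Q)
    (b : (Fin n → ℝ) → ℝ) {C : ℝ} (hC : ∀ y ∈ Q, |b y| ≤ C) :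
    localFracMax n γ Q b x ≤ volume Q ^ (γ / (n : ℝ)) * ENNReal.ofReal C := by
  have hnR : (0 : ℝ) < n := by exact_mod_cast hn
  have hdiv0 : 0 ≤ γ / (n : ℝ) := div_nonneg hγ0 hnR.le
  refine iSup_le fun P => iSup_le fun hP => iSup_le fun _ => iSup_le fun hPQ => ?_
  have ha0 : volume P ≠ 0 := (cube_vol_pos hP).ne'
  have hat : volume P ≠ ⊤ := cube_vol_ne_top hP
  have h1 : ∫⁻ y in P, (‖b y‖₊ : ℝ≥0∞) ≤ volume P * ENNReal.ofReal C := by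
    calc ∫⁻ y in P, (‖b y‖₊ : ℝ≥0∞) ≤ ∫⁻ _ in P, ENNReal.ofReal C :=
        setLIntegral_mono' (cube_meas hP) fun y hy => by
          rw [← enorm_eq_nnnorm, Real.enorm_eq_ofReal_abs]
          exact ENNReal.ofReal_le_ofReal (hC y (hPQ hy))
      _ = volume P * ENNReal.ofReal C := by rw [setLIntegral_const, mul_comm]
  calc volume P ^ (γ / (n : ℝ) - 1) * ∫⁻ y in P, (‖b y‖₊ : ℝ≥0∞)
      ≤ volume P ^ (γ / (n : ℝ) - 1) * (volume P * ENNReal.ofReal C) :=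
        mul_le_mul_right h1 _
    _ = volume P ^ (γ / (n : ℝ)) * ENNReal.ofReal C := by
        rw [← mul_assoc, rpow_sub_one_mul ha0 hat]
    _ ≤ volume Q ^ (γ / (n : ℝ)) * ENNReal.ofReal C := by
        exact mul_le_mul_left (ENNReal.rpow_le_rpow (measure_mono hPQ) hdiv0) _

lemma localFracMax_ge (hn : 0 < n) {γ : ℝ}
    {Q : Set (Fin n → ℝ)} {x : Fin n → ℝ} (hQ : IsCube n Q) (hx : x ∈ Q)
    (b : (Fin n → ℝ) → ℝ) {c : ℝ} (hc : ∀ y ∈ Q, c ≤ |b y|) :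
    volume Q ^ (γ / (n : ℝ)) * ENNReal.ofReal c ≤ localFracMax n γ Q b x := by
  have hV0 : volume Q ≠ 0 := (cube_vol_pos hQ).ne'
  have hVt : volume Q ≠ ⊤ := cube_vol_ne_top hQ
  have h1 : volume Q * ENNReal.ofReal c ≤ ∫⁻ y in Q, (‖b y‖₊ : ℝ≥0∞) := by
    calc volume Q * ENNReal.ofReal c = ∫⁻ _ in Q, ENNReal.ofReal c := by
          rw [setLIntegral_const, mul_comm]
      _ ≤ ∫⁻ y in Q, (‖b y‖₊ : ℝ≥0∞) :=
        setLIntegral_mono' (cube_meas hQ) fun y hy => by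
          rw [← enorm_eq_nnnorm, Real.enorm_eq_ofReal_abs]
          exact ENNReal.ofReal_le_ofReal (hc y hy)
  calc volume Q ^ (γ / (n : ℝ)) * ENNReal.ofReal c
      = volume Q ^ (γ / (n : ℝ) - 1) * (volume Q * ENNReal.ofReal c) := by
        rw [← mul_assoc, rpow_sub_one_mul hV0 hVt]
    _ ≤ volume Q ^ (γ / (n : ℝ) - 1) * ∫⁻ y in Q, (‖b y‖₊ : ℝ≥0∞) :=
        mul_le_mul_right h1 _
    _ ≤ localFracMax n γ Q b x :=
        le_iSup_of_le Q (le_iSup_of_le hQ (le_iSup_of_le hx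
          (le_iSup_of_le (le_refl Q) le_rfl)))

lemma diff_eq {a b : ℝ≥0∞} (ha : a ≠ ⊤) (hb : b ≠ ⊤) :
    (a - b) + (b - a) = ENNReal.ofReal |a.toReal - b.toReal| := by
  rcases le_total a b with hab | hab
  · rw [tsub_eq_zero_of_le hab, zero_add,
      ← ENNReal.ofReal_toReal (show b - a ≠ ⊤ from ne_top_of_le_ne_top hb tsub_le_self)]
    congr 1
    rw [ENNReal.toReal_sub_of_le hab hb, abs_sub_comm,
      abs_of_nonneg (sub_nonneg.mpr (ENNReal.toReal_mono hb hab))]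
  · rw [tsub_eq_zero_of_le hab, add_zero,
      ← ENNReal.ofReal_toReal (show a - b ≠ ⊤ from ne_top_of_le_ne_top ha tsub_le_self)]
    congr 1
    rw [ENNReal.toReal_sub_of_le hab ha,
      abs_of_nonneg (sub_nonneg.mpr (ENNReal.toReal_mono ha hab))]

lemma cube_dist {c : Fin n → ℝ} {h : ℝ} (hh : 0 ≤ h) {x y : Fin n → ℝ}
    (hx : x ∈ Set.univ.pi fun i => Set.Icc (c i) (c i + h))
    (hy : y ∈ Set.univ.pi fun i => Set.Icc (c i) (c i + h)) :
    dist x y ≤ h := by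
  rw [Set.mem_univ_pi] at hx hy
  rw [dist_pi_le_iff hh]
  intro i
  have h1 := hx i; have h2 := hy i
  rw [Set.mem_Icc] at h1 h2
  rw [Real.dist_eq, abs_le]
  constructor <;> [linarith [h1.1, h2.2]; linarith [h1.2, h2.1]]

end Aux2

theorem stmt11 (n : ℕ) (α β L : ℝ) (hα0 : 0 < α) (hαn : α < n)
    (hβ0 : 0 < β) (hβ1 : β < 1) (hαβn : α + β < n) (hL : 0 ≤ L)
    (b : (Fin n → ℝ) → ℝ) (hb : ∀ x y, |b x - b y| ≤ L * dist x y ^ β) :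
    (∀ Q : Set (Fin n → ℝ), IsCube n Q → ∀ x ∈ Q,
      (volume Q ^ (-(α / (n : ℝ))) * localFracMax n α Q b x - localFracMax n 0 Q b x)
        + (localFracMax n 0 Q b x - volume Q ^ (-(α / (n : ℝ))) * localFracMax n α Q b x)
      ≤ volume Q ^ (-(α / (n : ℝ))) *
          ENNReal.ofReal |ncomm n α (fun y => |b y|) (Q.indicator fun _ => (1 : ℝ)) x|
        + ENNReal.ofReal |ncomm n 0 (fun y => |b y|) (Q.indicator fun _ => (1 : ℝ)) x|) ∧
    ∃ C > (0 : ℝ), ∀ Q : Set (Fin n → ℝ), IsCube n Q →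
      volume Q ^ (-(1 + β / (n : ℝ))) *
        ∫⁻ x in Q,
          ((volume Q ^ (-(α / (n : ℝ))) * localFracMax n α Q b x - localFracMax n 0 Q b x)
            + (localFracMax n 0 Q b x
                - volume Q ^ (-(α / (n : ℝ))) * localFracMax n α Q b x))
      ≤ ENNReal.ofReal (C * L) := by
  have hnR : (0 : ℝ) < n := lt_trans hα0 hαn
  have hn : 0 < n := by exact_mod_cast hnR
  have main : ∀ Q : Set (Fin n → ℝ), IsCube n Q → ∀ x ∈ Q,
      ((volume Q ^ (-(α / (n : ℝ))) * localFracMax n α Q b x - localFracMax n 0 Q b x)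
        + (localFracMax n 0 Q b x - volume Q ^ (-(α / (n : ℝ))) * localFracMax n α Q b x)
      ≤ volume Q ^ (-(α / (n : ℝ))) *
          ENNReal.ofReal |ncomm n α (fun y => |b y|) (Q.indicator fun _ => (1 : ℝ)) x|
        + ENNReal.ofReal |ncomm n 0 (fun y => |b y|) (Q.indicator fun _ => (1 : ℝ)) x|) ∧
      ((volume Q ^ (-(α / (n : ℝ))) * localFracMax n α Q b x - localFracMax n 0 Q b x)
        + (localFracMax n 0 Q b x - volume Q ^ (-(α / (n : ℝ))) * localFracMax n α Q b x)
      ≤ ENNReal.ofReal (2 * L) * volume Q ^ (β / (n : ℝ))) := by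
    rintro Q hQcube x hx
    obtain ⟨c, h, hh, hQeq⟩ := hQcube
    have hQc : IsCube n Q := ⟨c, h, hh, hQeq⟩
    have hV0 : volume Q ≠ 0 := (cube_vol_pos hQc).ne'
    have hVt : volume Q ≠ ⊤ := cube_vol_ne_top hQc
    set ε := L * h ^ β with hεdef
    have hε0 : 0 ≤ ε := mul_nonneg hL (Real.rpow_nonneg hh.le β)
    have hdistb : ∀ y ∈ Q, |b x - b y| ≤ ε := by
      intro y hy
      have hd : dist x y ≤ h := by
        rw [hQeq] at hx hy; exact cube_dist hh.le hx hy
      calc |b x - b y| ≤ L * dist x y ^ β := hb x y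
        _ ≤ ε := mul_le_mul_of_nonneg_left (Real.rpow_le_rpow dist_nonneg hd hβ0.le) hL
    have hub : ∀ y ∈ Q, |b y| ≤ |b x| + ε := by
      intro y hy
      have h1 := abs_sub_abs_le_abs_sub (b y) (b x)
      have h2 := hdistb y hy
      rw [abs_sub_comm] at h2
      linarith
    have hlb : ∀ y ∈ Q, |b x| - ε ≤ |b y| := by
      intro y hy
      have h1 := abs_sub_abs_le_abs_sub (b x) (b y)
      have h2 := hdistb y hy
      linarith
    have key : ∀ γ : ℝ, 0 ≤ γ → γ ≤ (n : ℝ) →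
        localFracMax n γ Q b x ≠ ⊤ ∧
        (localFracMax n γ Q b x).toReal
          ≤ (volume Q ^ (γ / (n : ℝ))).toReal * (|b x| + ε) ∧
        (volume Q ^ (γ / (n : ℝ))).toReal * (|b x| - ε)
          ≤ (localFracMax n γ Q b x).toReal ∧
        fracMax n γ (Q.indicator fun _ => (1 : ℝ)) x = volume Q ^ (γ / (n : ℝ)) ∧
        fracMax n γ (fun y => |b y| * Q.indicator (fun _ => (1 : ℝ)) y) x
          = localFracMax n γ Q b x := by
      intro γ hγ0 hγn'
      have hexp : γ / (n : ℝ) - 1 ≤ 0 := by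
        have := (div_le_one hnR).mpr hγn'; linarith
      have hVγt : volume Q ^ (γ / (n : ℝ)) ≠ ⊤ :=
        ENNReal.rpow_ne_top_of_nonneg (div_nonneg hγ0 hnR.le) hVt
      have hup := localFracMax_le hn hγ0 hγn' (x := x) hQc b hub
      have hlo := localFracMax_ge hn (γ := γ) hQc hx b hlb
      have hfin : localFracMax n γ Q b x ≠ ⊤ :=
        ne_top_of_le_ne_top (ENNReal.mul_ne_top hVγt ENNReal.ofReal_ne_top) hup
      refine ⟨hfin, ?_, ?_, fracMax_ind hn hγ0 hγn' hQc hx, fracMax_eq_local hexp hQc hx b⟩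
      · have h1 := ENNReal.toReal_mono (ENNReal.mul_ne_top hVγt ENNReal.ofReal_ne_top) hup
        rwa [ENNReal.toReal_mul,
          ENNReal.toReal_ofReal (add_nonneg (abs_nonneg _) hε0)] at h1
      · have h1 := ENNReal.toReal_mono hfin hlo
        rw [ENNReal.toReal_mul, ENNReal.toReal_ofReal'] at h1
        have hvγ : (0:ℝ) ≤ (volume Q ^ (γ / (n : ℝ))).toReal := ENNReal.toReal_nonneg
        calc (volume Q ^ (γ / (n : ℝ))).toReal * (|b x| - ε)
            ≤ (volume Q ^ (γ / (n : ℝ))).toReal * max (|b x| - ε) 0 :=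
              mul_le_mul_of_nonneg_left (le_max_left _ _) hvγ
          _ ≤ _ := h1
    obtain ⟨hfα, hupα, hloα, hfiα, hflα⟩ := key α hα0.le hαn.le
    obtain ⟨hf0, hup0, hlo0, hfi0, hfl0⟩ := key 0 le_rfl hnR.le
    simp only [zero_div, ENNReal.rpow_zero, ENNReal.toReal_one, one_mul] at hup0 hlo0 hfi0
    set Mα := localFracMax n α Q b x with hMαdef
    set M0 := localFracMax n 0 Q b x with hM0def
    set vα := (volume Q ^ (α / (n : ℝ))).toReal with hvαdef
    have hvαt : volume Q ^ (α / (n : ℝ)) ≠ ⊤ :=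
      ENNReal.rpow_ne_top_of_nonneg (div_nonneg hα0.le hnR.le) hVt
    have hvα : 0 < vα :=
      ENNReal.toReal_pos (ENNReal.rpow_pos (cube_vol_pos hQc) hVt).ne' hvαt
    set U := volume Q ^ (-(α / (n : ℝ))) with hUdef
    have hUinv : U = (volume Q ^ (α / (n : ℝ)))⁻¹ := ENNReal.rpow_neg _ _
    have hUt : U ≠ ⊤ := by
      rw [hUinv]
      exact ENNReal.inv_ne_top.mpr (ENNReal.rpow_pos (cube_vol_pos hQc) hVt).ne'
    have hUtr : U.toReal = vα⁻¹ := by rw [hUinv, ENNReal.toReal_inv, hvαdef]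
    have hUMαt : U * Mα ≠ ⊤ := ENNReal.mul_ne_top hUt hfα
    have hLHS : (U * Mα - M0) + (M0 - U * Mα)
        = ENNReal.ofReal |vα⁻¹ * Mα.toReal - M0.toReal| := by
      rw [diff_eq hUMαt hf0, ENNReal.toReal_mul, hUtr]
    set mα := Mα.toReal with hmαdef
    set m0 := M0.toReal with hm0def
    set bx := |b x| with hbxdef
    have hp1 : vα⁻¹ * mα ≤ bx + ε := by
      have h1 := mul_le_mul_of_nonneg_left hupα (inv_nonneg.mpr hvα.le)
      rwa [← mul_assoc, inv_mul_cancel₀ hvα.ne', one_mul] at h1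
    have hp2 : bx - ε ≤ vα⁻¹ * mα := by
      have h1 : vα * (bx - ε) ≤ vα * (vα⁻¹ * mα) := by
        rw [← mul_assoc, mul_inv_cancel₀ hvα.ne', one_mul]
        calc vα * (bx - ε) = vα * (bx - ε) := rfl
          _ ≤ mα := hloα
      exact le_of_mul_le_mul_left h1 hvα
    constructor
    · rw [hLHS]
      have hnc : ncomm n α (fun y => |b y|) (Q.indicator fun _ => (1 : ℝ)) x
          = bx * vα - mα := by
        simp only [ncomm]
        rw [hfiα, hflα]
      have hnc0 : ncomm n 0 (fun y => |b y|) (Q.indicator fun _ => (1 : ℝ)) x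
          = bx * 1 - m0 := by
        simp only [ncomm]
        rw [hfi0, hfl0]
        simp [hbxdef, hm0def]
      rw [hnc, hnc0]
      have hU : U = ENNReal.ofReal vα⁻¹ := by rw [← hUtr, ENNReal.ofReal_toReal hUt]
      rw [hU, ← ENNReal.ofReal_mul (inv_nonneg.mpr hvα.le),
        ← ENNReal.ofReal_add (mul_nonneg (inv_nonneg.mpr hvα.le) (abs_nonneg _))
          (abs_nonneg _)]
      apply ENNReal.ofReal_le_ofReal
      have hkey : vα⁻¹ * mα - m0 = -(vα⁻¹ * (bx * vα - mα)) + (bx * 1 - m0) := by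
        field_simp
        ring
      calc |vα⁻¹ * mα - m0| = |-(vα⁻¹ * (bx * vα - mα)) + (bx * 1 - m0)| := by rw [hkey]
        _ ≤ |-(vα⁻¹ * (bx * vα - mα))| + |bx * 1 - m0| := abs_add_le _ _
        _ = vα⁻¹ * |bx * vα - mα| + |bx * 1 - m0| := by
            rw [abs_neg, abs_mul, abs_of_nonneg (inv_nonneg.mpr hvα.le)]
    · rw [hLHS]
      have habs : |vα⁻¹ * mα - m0| ≤ 2 * ε := abs_le.mpr ⟨by linarith, by linarith⟩
      have hVβ : volume Q ^ (β / (n : ℝ)) = ENNReal.ofReal (h ^ β) := by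
        rw [hQeq, cube_vol hh.le, ← ENNReal.rpow_natCast (ENNReal.ofReal h) n,
          ← ENNReal.rpow_mul,
          show (n : ℝ) * (β / (n : ℝ)) = β by field_simp]
        exact ENNReal.ofReal_rpow_of_pos hh
      rw [hVβ, ← ENNReal.ofReal_mul (by linarith)]
      apply ENNReal.ofReal_le_ofReal
      calc |vα⁻¹ * mα - m0| ≤ 2 * ε := habs
        _ = 2 * L * h ^ β := by rw [hεdef]; ring
  refine ⟨fun Q hQ x hx => (main Q hQ x hx).1, 2, by norm_num, fun Q hQ => ?_⟩
  have hV0 : volume Q ≠ 0 := (cube_vol_pos hQ).ne'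
  have hVt : volume Q ≠ ⊤ := cube_vol_ne_top hQ
  calc volume Q ^ (-(1 + β / (n : ℝ))) *
        ∫⁻ x in Q,
          ((volume Q ^ (-(α / (n : ℝ))) * localFracMax n α Q b x - localFracMax n 0 Q b x)
            + (localFracMax n 0 Q b x
                - volume Q ^ (-(α / (n : ℝ))) * localFracMax n α Q b x))
      ≤ volume Q ^ (-(1 + β / (n : ℝ))) *
        ∫⁻ _ in Q, (ENNReal.ofReal (2 * L) * volume Q ^ (β / (n : ℝ))) :=
        mul_le_mul_right
          (setLIntegral_mono' (cube_meas hQ) fun x hx => (main Q hQ x hx).2) _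
    _ = volume Q ^ (-(1 + β / (n : ℝ))) *
        (ENNReal.ofReal (2 * L) * volume Q ^ (β / (n : ℝ)) * volume Q) := by
        rw [setLIntegral_const]
    _ = ENNReal.ofReal (2 * L) *
        (volume Q ^ (-(1 + β / (n : ℝ))) * (volume Q ^ (β / (n : ℝ)) * volume Q ^ (1 : ℝ))) := by
        rw [ENNReal.rpow_one]; ring
    _ = ENNReal.ofReal (2 * L) := by
        rw [← ENNReal.rpow_add _ _ hV0 hVt, ← ENNReal.rpow_add _ _ hV0 hVt,
          show -(1 + β / (n : ℝ)) + (β / (n : ℝ) + 1) = 0 by ring,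
          ENNReal.rpow_zero, mul_one]
end
end

section
/- Let 0 < α < n, 0 < β < 1, 0 < α+β < n. If b is locally integrable and there exists s ∈ [1,∞) such that sup_Q |Q|^{−β/n}(|Q|^{−1}∫_Q |b(x) − |Q|^{−α/n}M_{α,Q}(b)(x)|^s dx)^{1/s} < ∞, then b ∈ Λ̇_β(ℝⁿ). -/
open MeasureTheory ENNReal Set

noncomputable section

section Stmt14AuxSection
open Metric Filter Topology

namespace Stmt14Aux

variable {n : ℕ}

/-- Average of `b` over the closed ball (= cube) of center `x`, radius `r`. -/
def avgB (n : ℕ) (b : (Fin n → ℝ) → ℝ) (x : Fin n → ℝ) (r : ℝ) : ℝ :=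
  ⨍ y in closedBall x r, b y

lemma volB_toReal (x : Fin n → ℝ) {r : ℝ} (hr : 0 < r) :
    (volume (closedBall x r)).toReal = (2*r)^n := by
  rw [Real.volume_pi_closedBall x hr.le, Fintype.card_fin,
    ENNReal.toReal_ofReal (by positivity)]

lemma volB_pos (x : Fin n → ℝ) {r : ℝ} (hr : 0 < r) :
    0 < (volume (closedBall x r)).toReal := by
  rw [volB_toReal x hr]; positivity

lemma intB (b : (Fin n → ℝ) → ℝ) (hb : LocallyIntegrable b volume)
    (x : Fin n → ℝ) (r : ℝ) : IntegrableOn b (closedBall x r) volume :=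
  hb.integrableOn_isCompact (isCompact_closedBall x r)

lemma intB_sub_abs (b : (Fin n → ℝ) → ℝ) (hb : LocallyIntegrable b volume)
    (x : Fin n → ℝ) (r : ℝ) (c : ℝ) :
    IntegrableOn (fun y => |b y - c|) (closedBall x r) volume := by
  have hc : IntegrableOn (fun _ => c) (closedBall x r) volume :=
    integrableOn_const measure_closedBall_lt_top.ne
  have h := ((intB b hb x r).sub hc).norm
  simpa [Real.norm_eq_abs, IntegrableOn] using h

/-- Key oscillation comparison. -/
lemma osc2 {β : ℝ} (b : (Fin n → ℝ) → ℝ) (hb : LocallyIntegrable b volume)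
    {K : ℝ} (hK0 : 0 ≤ K)
    (hK : ∀ x r, 0 < r → ∫ y in closedBall x r, |b y - avgB n b x r| ≤
      K * r ^ β * (volume (closedBall x r)).toReal)
    {x y : Fin n → ℝ} {r R : ℝ} (hr : 0 < r) (hrR : r ≤ R) (hR2 : R ≤ 2 * r)
    (hsub : closedBall y r ⊆ closedBall x R) :
    |avgB n b y r - avgB n b x R| ≤ 2 ^ n * K * R ^ β := by
  have hR : 0 < R := hr.trans_le hrR
  set A := avgB n b x R with hA
  set vr := (volume (closedBall y r)).toReal with hvr
  set vR := (volume (closedBall x R)).toReal with hvR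
  have hvr0 : 0 < vr := volB_pos y hr
  have hvR0 : 0 < vR := volB_pos x hR
  have h1 : avgB n b y r - A = (vr)⁻¹ * ∫ z in closedBall y r, (b z - A) := by
    rw [integral_sub (intB b hb y r) (integrableOn_const measure_closedBall_lt_top.ne)]
    rw [avgB, setAverage_eq, setIntegral_const, smul_eq_mul]
    rw [measureReal_def, ← hvr, mul_sub, smul_eq_mul]
    congr 1
    field_simp
  have h2 : |avgB n b y r - A| ≤ (vr)⁻¹ * ∫ z in closedBall y r, |b z - A| := by
    rw [h1, abs_mul, abs_of_nonneg (by positivity : (0:ℝ) ≤ vr⁻¹)]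
    gcongr
    simpa [Real.norm_eq_abs] using
      norm_integral_le_integral_norm (μ := volume.restrict (closedBall y r)) (fun z => b z - A)
  have h3 : ∫ z in closedBall y r, |b z - A| ≤ ∫ z in closedBall x R, |b z - A| := by
    apply setIntegral_mono_set (intB_sub_abs b hb x R A)
      (Filter.Eventually.of_forall fun z => abs_nonneg _) (HasSubset.Subset.eventuallyLE hsub)
  have h4 : ∫ z in closedBall x R, |b z - A| ≤ K * R ^ β * vR := hK x R hR
  have hratio : vR / vr ≤ 2 ^ n := by
    rw [hvR, hvr, volB_toReal x hR, volB_toReal y hr, ← div_pow]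
    have h2Rr : 2*R / (2*r) ≤ 2 := by rw [div_le_iff₀ (by linarith)]; linarith
    exact pow_le_pow_left₀ (by positivity) h2Rr n
  calc |avgB n b y r - A| ≤ vr⁻¹ * ∫ z in closedBall y r, |b z - A| := h2
    _ ≤ vr⁻¹ * (K * R ^ β * vR) := by
        have h34 := h3.trans h4
        gcongr
    _ = (K * R ^ β) * (vR / vr) := by rw [div_eq_mul_inv]; ring
    _ ≤ (K * R ^ β) * 2 ^ n := mul_le_mul_of_nonneg_left hratio (by positivity)
    _ = 2 ^ n * K * R ^ β := by ring


section Tele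

variable {β K : ℝ} {b : (Fin n → ℝ) → ℝ}

/-- One dyadic step. -/
lemma step (hβ0 : 0 < β) (hb : LocallyIntegrable b volume) (hK0 : 0 ≤ K)
    (hK : ∀ x r, 0 < r → ∫ y in closedBall x r, |b y - avgB n b x r| ≤
      K * r ^ β * (volume (closedBall x r)).toReal)
    (x : Fin n → ℝ) {r : ℝ} (hr : 0 < r) :
    |avgB n b x (r/2) - avgB n b x r| ≤ 2 ^ n * K * r ^ β :=
  osc2 b hb hK0 hK (by linarith) (by linarith) (by linarith)
    (closedBall_subset_closedBall (by linarith))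

lemma tele (hβ0 : 0 < β) (hb : LocallyIntegrable b volume) (hK0 : 0 ≤ K)
    (hK : ∀ x r, 0 < r → ∫ y in closedBall x r, |b y - avgB n b x r| ≤
      K * r ^ β * (volume (closedBall x r)).toReal)
    (x : Fin n → ℝ) (k : ℕ) :
    ∀ r : ℝ, 0 < r →
      |avgB n b x (r * (1/2)^k) - avgB n b x r| ≤ (2^n*K/(1-(1/2:ℝ)^β)) * r ^ β := by
  have hq1 : ((1:ℝ)/2) ^ β < 1 := Real.rpow_lt_one (by norm_num) (by norm_num) hβ0
  have hq0 : (0:ℝ) < (1/2:ℝ) ^ β := Real.rpow_pos_of_pos (by norm_num) β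
  set D : ℝ := 2^n*K/(1-(1/2:ℝ)^β) with hD
  have hD0 : 0 ≤ D := by
    apply div_nonneg (by positivity); linarith
  have hne : (1 - (1/2:ℝ)^β) ≠ 0 := by linarith
  have hDeq : D * (1/2:ℝ)^β + 2^n*K = D := by
    rw [hD]
    field_simp
    ring
  induction k with
  | zero => intro r hr; simp [hD0, abs_nonneg]; positivity
  | succ k ih =>
    intro r hr
    have hr2 : 0 < r/2 := by linarith
    have e1 : r * (1/2)^(k+1) = (r/2) * (1/2)^k := by ring
    have h1 := ih (r/2) hr2
    have h2 := step hβ0 hb hK0 hK x hr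
    have hhalf : ((r:ℝ)/2) ^ β = r ^ β * (1/2:ℝ)^β := by
      rw [div_eq_mul_inv, Real.mul_rpow hr.le (by norm_num)]
      norm_num
    calc |avgB n b x (r * (1/2)^(k+1)) - avgB n b x r|
        ≤ |avgB n b x ((r/2) * (1/2)^k) - avgB n b x (r/2)| +
          |avgB n b x (r/2) - avgB n b x r| := by
          rw [e1]; exact abs_sub_le _ _ _
      _ ≤ D * (r/2) ^ β + 2^n*K * r ^ β := add_le_add h1 h2
      _ = (D * (1/2:ℝ)^β + 2^n*K) * r ^ β := by rw [hhalf]; ring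
      _ = D * r ^ β := by rw [hDeq]

/-- General comparison between radii `0 < r' ≤ r`. -/
lemma gen (hβ0 : 0 < β) (hb : LocallyIntegrable b volume) (hK0 : 0 ≤ K)
    (hK : ∀ x r, 0 < r → ∫ y in closedBall x r, |b y - avgB n b x r| ≤
      K * r ^ β * (volume (closedBall x r)).toReal)
    (x : Fin n → ℝ) {r' r : ℝ} (hr' : 0 < r') (hr'r : r' ≤ r) :
    |avgB n b x r' - avgB n b x r| ≤ (2^n*K/(1-(1/2:ℝ)^β) + 2^n*K) * r ^ β := by
  have hr : 0 < r := lt_of_lt_of_le hr' hr'r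
  set t : ℝ := r'/r with ht
  have ht0 : 0 < t := by positivity
  have ht1 : t ≤ 1 := by rw [ht, div_le_one hr]; exact hr'r
  have hex : ∃ m : ℕ, (1/2:ℝ)^m < t := exists_pow_lt_of_lt_one ht0 (by norm_num)
  classical
  set k' := Nat.find hex with hk'
  have hfind : (1/2:ℝ)^k' < t := Nat.find_spec hex
  have hk'0 : k' ≠ 0 := by
    intro h
    rw [h] at hfind; simp at hfind; linarith
  set k := k' - 1 with hkdef
  have hkk' : k + 1 = k' := Nat.succ_pred_eq_of_ne_zero hk'0
  have hklt : k < k' := by omega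
  have hnot : ¬ ((1/2:ℝ)^k < t) := Nat.find_min hex hklt
  have htle : t ≤ (1/2:ℝ)^k := le_of_not_gt hnot
  have hlt : (1/2:ℝ)^(k+1) < t := by rw [hkk']; exact hfind
  set r'' := r * (1/2:ℝ)^k with hr''
  have hpow0 : (0:ℝ) < (1/2:ℝ)^k := by positivity
  have hr''0 : 0 < r'' := by positivity
  have hr'r'' : r' ≤ r'' := by
    have := mul_le_mul_of_nonneg_left htle hr.le
    rw [ht] at this
    calc r' = r * (r'/r) := by field_simp
      _ ≤ r * (1/2:ℝ)^k := this
  have hr''2r' : r'' ≤ 2 * r' := by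
    have h := mul_le_mul_of_nonneg_left hlt.le hr.le
    have : r * (1/2:ℝ)^(k+1) ≤ r' := by
      rw [ht] at h
      calc r * (1/2:ℝ)^(k+1) ≤ r * (r'/r) := h
        _ = r' := by field_simp
    calc r'' = 2 * (r * (1/2:ℝ)^(k+1)) := by rw [hr'']; ring
      _ ≤ 2 * r' := by linarith
  have hr''r : r'' ≤ r := by
    calc r'' = r * (1/2:ℝ)^k := rfl
      _ ≤ r * 1 := by
          apply mul_le_mul_of_nonneg_left _ hr.le
          apply pow_le_one₀ (by norm_num) (by norm_num)
      _ = r := by ring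
  have h1 : |avgB n b x r' - avgB n b x r''| ≤ 2^n*K * r ^ β := by
    have := osc2 b hb hK0 hK hr' hr'r'' hr''2r'
      (closedBall_subset_closedBall hr'r'') (x := x) (y := x)
    calc |avgB n b x r' - avgB n b x r''| ≤ 2^n*K * r'' ^ β := this
      _ ≤ 2^n*K * r ^ β := by
          have := Real.rpow_le_rpow hr''0.le hr''r hβ0.le
          have h2K : (0:ℝ) ≤ 2^n*K := by positivity
          nlinarith
  have h2 := tele hβ0 hb hK0 hK x k r hr
  calc |avgB n b x r' - avgB n b x r|
      ≤ |avgB n b x r' - avgB n b x r''| + |avgB n b x r'' - avgB n b x r| := abs_sub_le _ _ _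
    _ ≤ 2^n*K * r ^ β + (2^n*K/(1-(1/2:ℝ)^β)) * r ^ β := add_le_add h1 h2
    _ = (2^n*K/(1-(1/2:ℝ)^β) + 2^n*K) * r ^ β := by ring

end Tele


section Limit

variable {β K : ℝ} {b : (Fin n → ℝ) → ℝ}

lemma pow_rpow_q (k : ℕ) (β : ℝ) : ((1/2:ℝ)^k) ^ β = ((1/2:ℝ)^β)^k := by
  rw [← Real.rpow_natCast ((1/2:ℝ)) k, ← Real.rpow_mul (by norm_num), mul_comm,
    Real.rpow_mul (by norm_num), Real.rpow_natCast]

lemma cauchy (hβ0 : 0 < β) (hb : LocallyIntegrable b volume) (hK0 : 0 ≤ K)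
    (hK : ∀ x r, 0 < r → ∫ y in closedBall x r, |b y - avgB n b x r| ≤
      K * r ^ β * (volume (closedBall x r)).toReal)
    (x : Fin n → ℝ) :
    CauchySeq (fun k : ℕ => avgB n b x ((1/2:ℝ)^k)) := by
  apply cauchySeq_of_le_geometric ((1/2:ℝ)^β) (2^n*K)
    (Real.rpow_lt_one (by norm_num) (by norm_num) hβ0)
  intro k
  have hpk : (0:ℝ) < (1/2:ℝ)^k := by positivity
  have h := step hβ0 hb hK0 hK x hpk
  have e : (1/2:ℝ)^k / 2 = (1/2:ℝ)^(k+1) := by ring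
  rw [e] at h
  rw [Real.dist_eq, pow_rpow_q] at *
  rw [abs_sub_comm]
  exact h

/-- The Hölder representative. -/
def gfun (n : ℕ) (b : (Fin n → ℝ) → ℝ) : (Fin n → ℝ) → ℝ :=
  fun x => limUnder atTop (fun k : ℕ => avgB n b x ((1/2:ℝ)^k))

lemma gfun_tendsto (hβ0 : 0 < β) (hb : LocallyIntegrable b volume) (hK0 : 0 ≤ K)
    (hK : ∀ x r, 0 < r → ∫ y in closedBall x r, |b y - avgB n b x r| ≤
      K * r ^ β * (volume (closedBall x r)).toReal)
    (x : Fin n → ℝ) :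
    Filter.Tendsto (fun k : ℕ => avgB n b x ((1/2:ℝ)^k)) atTop (𝓝 (gfun n b x)) :=
  (cauchy hβ0 hb hK0 hK x).tendsto_limUnder

lemma gfun_close (hβ0 : 0 < β) (hb : LocallyIntegrable b volume) (hK0 : 0 ≤ K)
    (hK : ∀ x r, 0 < r → ∫ y in closedBall x r, |b y - avgB n b x r| ≤
      K * r ^ β * (volume (closedBall x r)).toReal)
    (x : Fin n → ℝ) {r : ℝ} (hr : 0 < r) :
    |gfun n b x - avgB n b x r| ≤ (2^n*K/(1-(1/2:ℝ)^β) + 2^n*K) * r ^ β := by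
  have htd : Filter.Tendsto (fun k : ℕ => |avgB n b x ((1/2:ℝ)^k) - avgB n b x r|)
      atTop (𝓝 |gfun n b x - avgB n b x r|) :=
    (((gfun_tendsto hβ0 hb hK0 hK x).sub_const _).abs)
  apply le_of_tendsto htd
  have hev : ∀ᶠ k : ℕ in atTop, (1/2:ℝ)^k ≤ r := by
    have h0 : Filter.Tendsto (fun k : ℕ => (1/2:ℝ)^k) atTop (𝓝 0) :=
      tendsto_pow_atTop_nhds_zero_of_lt_one (by norm_num) (by norm_num)
    exact h0.eventually_le_const hr
  filter_upwards [hev] with k hk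
  exact gen hβ0 hb hK0 hK x (by positivity) hk

lemma gfun_holder (hβ0 : 0 < β) (hb : LocallyIntegrable b volume) (hK0 : 0 ≤ K)
    (hK : ∀ x r, 0 < r → ∫ y in closedBall x r, |b y - avgB n b x r| ≤
      K * r ^ β * (volume (closedBall x r)).toReal)
    (x y : Fin n → ℝ) :
    |gfun n b x - gfun n b y| ≤
      ((2^n*K/(1-(1/2:ℝ)^β) + 2^n*K) * ((2:ℝ)^β + 1) + 2^n*K*(2:ℝ)^β) * dist x y ^ β := by
  set c₁ : ℝ := 2^n*K/(1-(1/2:ℝ)^β) + 2^n*K with hc₁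
  have hq1 : ((1:ℝ)/2) ^ β < 1 := Real.rpow_lt_one (by norm_num) (by norm_num) hβ0
  have hc₁0 : 0 ≤ c₁ := by
    apply add_nonneg _ (by positivity)
    apply div_nonneg (by positivity); linarith
  rcases eq_or_ne x y with rfl | hxy
  · simp only [sub_self, abs_zero, dist_self]
    rw [Real.zero_rpow hβ0.ne']
    simp
  · set d := dist x y with hd
    have hd0 : 0 < d := dist_pos.2 hxy
    have hsub : closedBall y d ⊆ closedBall x (2*d) := by
      intro z hz
      simp only [mem_closedBall] at hz ⊢
      have hyx : dist y x = d := dist_comm y x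
      calc dist z x ≤ dist z y + dist y x := dist_triangle _ _ _
        _ ≤ d + d := by rw [hyx]; exact add_le_add hz le_rfl
        _ = 2*d := by ring
    have h1 : |gfun n b x - avgB n b x (2*d)| ≤ c₁ * (2*d) ^ β :=
      gfun_close hβ0 hb hK0 hK x (by linarith)
    have h2 : |avgB n b y d - avgB n b x (2*d)| ≤ 2^n*K * (2*d) ^ β :=
      osc2 b hb hK0 hK hd0 (by linarith) (by linarith) hsub
    have h3 : |gfun n b y - avgB n b y d| ≤ c₁ * d ^ β :=
      gfun_close hβ0 hb hK0 hK y hd0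
    have h2d : (2*d) ^ β = (2:ℝ)^β * d ^ β := Real.mul_rpow (by norm_num) hd0.le
    calc |gfun n b x - gfun n b y|
        ≤ |gfun n b x - avgB n b x (2*d)| + |avgB n b x (2*d) - gfun n b y| := abs_sub_le _ _ _
      _ ≤ c₁ * (2*d) ^ β + (|avgB n b x (2*d) - avgB n b y d| + |avgB n b y d - gfun n b y|) := by
          have := abs_sub_le (avgB n b x (2*d)) (avgB n b y d) (gfun n b y)
          exact add_le_add h1 this
      _ ≤ c₁ * (2*d) ^ β + (2^n*K * (2*d) ^ β + c₁ * d ^ β) := by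
          rw [abs_sub_comm (avgB n b x (2*d)) (avgB n b y d),
            abs_sub_comm (avgB n b y d) (gfun n b y)]
          exact add_le_add (le_refl _) (add_le_add h2 h3)
      _ = (c₁ * ((2:ℝ)^β + 1) + 2^n*K*(2:ℝ)^β) * d ^ β := by rw [h2d]; ring

end Limit


section AE

variable {β K : ℝ} {b : (Fin n → ℝ) → ℝ}

lemma gfun_ae_eq (hβ0 : 0 < β) (hb : LocallyIntegrable b volume) (hK0 : 0 ≤ K)
    (hK : ∀ x r, 0 < r → ∫ y in closedBall x r, |b y - avgB n b x r| ≤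
      K * r ^ β * (volume (closedBall x r)).toReal) :
    b =ᵐ[volume] gfun n b := by
  have hbes := IsUnifLocDoublingMeasure.ae_tendsto_average
    (μ := (volume : Measure (Fin n → ℝ))) hb 1
  filter_upwards [hbes] with x hx
  have hδ : Filter.Tendsto (fun k : ℕ => (1/2:ℝ)^k) atTop (𝓝[>] 0) := by
    apply tendsto_nhdsWithin_of_tendsto_nhds_of_eventually_within
    · exact tendsto_pow_atTop_nhds_zero_of_lt_one (by norm_num) (by norm_num)
    · filter_upwards with k
      have : (0:ℝ) < (1/2:ℝ)^k := by positivity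
      exact this
  have hmem : ∀ᶠ k : ℕ in atTop, x ∈ closedBall x (1 * (1/2:ℝ)^k) := by
    filter_upwards with k
    exact mem_closedBall_self (by positivity)
  have h1 : Filter.Tendsto (fun k : ℕ => ⨍ y in closedBall x ((1/2:ℝ)^k), b y)
      atTop (𝓝 (b x)) := hx _ _ hδ hmem
  exact tendsto_nhds_unique h1 (gfun_tendsto hβ0 hb hK0 hK x)

end AE


section Extract

variable {α β s : ℝ} {b : (Fin n → ℝ) → ℝ}

lemma ball_isCube (x : Fin n → ℝ) {r : ℝ} (hr : 0 < r) :
    IsCube n (closedBall x r) := by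
  refine ⟨fun i => x i - r, 2*r, by linarith, ?_⟩
  rw [closedBall_pi x hr.le]
  ext y
  simp only [Set.mem_pi, Set.mem_univ, forall_true_left, Real.closedBall_eq_Icc, Set.mem_Icc,
    true_implies]
  constructor
  · intro h i
    obtain ⟨h1, h2⟩ := h i
    constructor <;> [linarith; linarith]
  · intro h i
    obtain ⟨h1, h2⟩ := h i
    constructor <;> [linarith; linarith]

lemma key_pointwise (hα0 : 0 < α) (hb : LocallyIntegrable b volume)
    (x₀ : Fin n → ℝ) {r : ℝ} (hr : 0 < r) {z : Fin n → ℝ} (hz : z ∈ closedBall x₀ r) :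
    ENNReal.ofReal (avgB n b x₀ r - b z) ≤
      ((b z : EReal) - ((volume (closedBall x₀ r) ^ (-(α / (n : ℝ))) *
        localFracMax n α (closedBall x₀ r) b z : ℝ≥0∞) : EReal)).abs := by
  set Q := closedBall x₀ r with hQ
  set v := volume Q with hv
  have hv0 : v ≠ 0 := by
    rw [hv, hQ, Real.volume_pi_closedBall x₀ hr.le, Fintype.card_fin]
    simp only [ne_eq, ENNReal.ofReal_eq_zero, not_le]
    positivity
  have hvT : v ≠ ⊤ := by
    rw [hv, hQ, Real.volume_pi_closedBall x₀ hr.le]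
    exact ENNReal.ofReal_ne_top
  have hbi : IntegrableOn b Q volume := intB b hb x₀ r
  set M := localFracMax n α Q b z with hM
  set a : ℝ≥0∞ := v ^ (-(α / (n:ℝ))) * M with ha
  have hMQ : v ^ (α / (n:ℝ) - 1) * ∫⁻ y in Q, ‖b y‖₊ ≤ M := by
    rw [hM, localFracMax]
    apply le_iSup_of_le Q
    apply le_iSup_of_le (ball_isCube x₀ hr)
    apply le_iSup_of_le hz
    exact le_iSup_of_le (subset_refl Q) le_rfl
  have hm : v⁻¹ * ∫⁻ y in Q, ‖b y‖₊ ≤ a := by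
    have e : v⁻¹ * ∫⁻ y in Q, (‖b y‖₊:ℝ≥0∞) =
        v ^ (-(α / (n:ℝ))) * (v ^ (α / (n:ℝ) - 1) * ∫⁻ y in Q, ‖b y‖₊) := by
      rw [← mul_assoc, ← ENNReal.rpow_add _ _ hv0 hvT]
      congr 1
      rw [show -(α/(n:ℝ)) + (α/(n:ℝ)-1) = -1 by ring, ENNReal.rpow_neg_one]
    rw [e, ha]
    exact mul_le_mul_right hMQ _
  have hItop : (∫⁻ y in Q, (‖b y‖₊:ℝ≥0∞)) ≠ ⊤ := hbi.2.ne
  have hmT : v⁻¹ * ∫⁻ y in Q, (‖b y‖₊:ℝ≥0∞) ≠ ⊤ :=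
    ENNReal.mul_ne_top (ENNReal.inv_ne_top.2 hv0) hItop
  have hA : avgB n b x₀ r ≤ (v⁻¹ * ∫⁻ y in Q, (‖b y‖₊:ℝ≥0∞)).toReal := by
    rw [ENNReal.toReal_mul, ENNReal.toReal_inv]
    have h1 : avgB n b x₀ r ≤ v.toReal⁻¹ * ∫ y in Q, ‖b y‖ := by
      rw [avgB, setAverage_eq, smul_eq_mul]
      have : (∫ y in Q, b y) ≤ ∫ y in Q, ‖b y‖ :=
        le_trans (le_abs_self _) (by simpa [Real.norm_eq_abs] using
          norm_integral_le_integral_norm (μ := volume.restrict Q) b)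
      have hinv : (0:ℝ) ≤ v.toReal⁻¹ := by positivity
      exact mul_le_mul_of_nonneg_left this hinv
    rwa [integral_norm_eq_lintegral_enorm (hbi.aestronglyMeasurable)] at h1
  by_cases haT : a = ⊤
  · rw [haT]
    rw [EReal.coe_ennreal_top, EReal.sub_top]
    simp only [EReal.abs_bot]
    exact le_top
  · have hcoe : (a : EReal) = ((a.toReal : ℝ) : EReal) := by
      rw [← EReal.toReal_coe_ennreal (x := a)]
      rw [EReal.coe_toReal]
      · exact fun h => haT (EReal.coe_ennreal_eq_top_iff.1 h)
      · exact (EReal.bot_lt_coe_ennreal a).ne'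
    rw [hcoe, ← EReal.coe_sub, EReal.abs_def]
    apply ENNReal.ofReal_le_ofReal
    have hta : avgB n b x₀ r ≤ a.toReal :=
      le_trans hA (ENNReal.toReal_mono haT hm)
    calc avgB n b x₀ r - b z ≤ a.toReal - b z := by linarith
      _ ≤ |a.toReal - b z| := le_abs_self _
      _ = |b z - a.toReal| := abs_sub_comm _ _

end Extract


section Holder

lemma holder_one {s : ℝ} (hs : 1 ≤ s) (Q : Set (Fin n → ℝ))
    (G : (Fin n → ℝ) → ℝ≥0∞) (hG : AEMeasurable G (volume.restrict Q)) :
    ∫⁻ z in Q, G z ≤ (∫⁻ z in Q, G z ^ s) ^ (1/s) * (volume Q) ^ (1 - 1/s) := by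
  rcases eq_or_lt_of_le hs with h1 | h1
  · rw [← h1]
    simp [ENNReal.rpow_one]
  · have hs0 : s ≠ 0 := by linarith
    have hs10 : s - 1 ≠ 0 := by intro h; apply hs0; linarith [h]
    have hpq : s.HolderConjugate (s/(s-1)) := (Real.holderConjugate_iff_eq_conjExponent h1).2 rfl
    have h := ENNReal.lintegral_mul_le_Lp_mul_Lq (volume.restrict Q) hpq hG
      (aemeasurable_const (b := (1:ℝ≥0∞)))
    simp only [Pi.mul_apply, mul_one, ENNReal.one_rpow, lintegral_one,
      Measure.restrict_apply_univ] at h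
    have he : 1/(s/(s-1)) = 1 - 1/s := by field_simp
    rw [he] at h
    exact h

end Holder


section Campanato

variable {α β s : ℝ} {b : (Fin n → ℝ) → ℝ}

lemma campanato_of_hsup (hα0 : 0 < α) (hαn : α < n) (hβ0 : 0 < β)
    (hb : LocallyIntegrable b volume) (hs : 1 ≤ s)
    {C : ℝ≥0∞} (hC : C ≠ ⊤)
    (hCQ : ∀ Q : Set (Fin n → ℝ), IsCube n Q →
      volume Q ^ (-(β / (n : ℝ))) *
        ((volume Q)⁻¹ *
          ∫⁻ x in Q, ((b x : EReal) -
            ((volume Q ^ (-(α / (n : ℝ))) * localFracMax n α Q b x : ℝ≥0∞) : EReal)).abs ^ s)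
          ^ (1 / s)
      ≤ C)
    (x₀ : Fin n → ℝ) (r : ℝ) (hr : 0 < r) :
    ∫ y in closedBall x₀ r, |b y - avgB n b x₀ r| ≤
      (2 * C.toReal * (2:ℝ)^β) * r ^ β * (volume (closedBall x₀ r)).toReal := by
  have hn : (0:ℝ) < n := lt_trans hα0 hαn
  have hnne : (n:ℝ) ≠ 0 := hn.ne'
  set Q := closedBall x₀ r with hQ
  set v := volume Q with hv
  have hvball : v = ENNReal.ofReal ((2*r)^n) := by
    rw [hv, hQ, Real.volume_pi_closedBall x₀ hr.le, Fintype.card_fin]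
  have hv0 : v ≠ 0 := by
    rw [hvball]; simp only [ne_eq, ENNReal.ofReal_eq_zero, not_le]; positivity
  have hvT : v ≠ ⊤ := by rw [hvball]; exact ENNReal.ofReal_ne_top
  have hvR : v.toReal = (2*r)^n := by rw [hvball, ENNReal.toReal_ofReal (by positivity)]
  have hvR0 : 0 < v.toReal := by rw [hvR]; positivity
  have hbi : IntegrableOn b Q volume := intB b hb x₀ r
  set A := avgB n b x₀ r with hA
  set F : (Fin n → ℝ) → ℝ≥0∞ := fun z => ((b z : EReal) -
      ((v ^ (-(α / (n : ℝ))) * localFracMax n α Q b z : ℝ≥0∞) : EReal)).abs with hF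
  set G : (Fin n → ℝ) → ℝ≥0∞ := fun z => ENNReal.ofReal (A - b z) with hG
  have hkey : ∀ z ∈ Q, G z ≤ F z := fun z hz => key_pointwise hα0 hb x₀ hr hz
  have hs0 : (0:ℝ) < s := lt_of_lt_of_le zero_lt_one hs
  have h1s0 : (0:ℝ) ≤ 1/s := by positivity
  -- the hypothesis at Q
  have hFs := hCQ Q (ball_isCube x₀ hr)
  set Y := ((v)⁻¹ * ∫⁻ z in Q, F z ^ s) ^ (1/s) with hY
  have hYle : Y ≤ v ^ (β/(n:ℝ)) * C := by
    have e1 : v ^ (β/(n:ℝ)) * v ^ (-(β/(n:ℝ))) = 1 := by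
      rw [← ENNReal.rpow_add _ _ hv0 hvT]
      simp
    calc Y = (v ^ (β/(n:ℝ)) * v ^ (-(β/(n:ℝ)))) * Y := by rw [e1, one_mul]
      _ = v ^ (β/(n:ℝ)) * (v ^ (-(β/(n:ℝ))) * Y) := mul_assoc _ _ _
      _ ≤ v ^ (β/(n:ℝ)) * C := mul_le_mul_right hFs _
  have hYeq : (∫⁻ z in Q, F z ^ s) ^ (1/s) = v ^ (1/s) * Y := by
    have e2 : v ^ (1/s) * (v⁻¹) ^ (1/s) = 1 := by
      rw [← ENNReal.mul_rpow_of_nonneg _ _ h1s0, ENNReal.mul_inv_cancel hv0 hvT,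
        ENNReal.one_rpow]
    calc (∫⁻ z in Q, F z ^ s) ^ (1/s)
        = (v ^ (1/s) * (v⁻¹) ^ (1/s)) * (∫⁻ z in Q, F z ^ s) ^ (1/s) := by rw [e2, one_mul]
      _ = v ^ (1/s) * ((v⁻¹) ^ (1/s) * (∫⁻ z in Q, F z ^ s) ^ (1/s)) := mul_assoc _ _ _
      _ = v ^ (1/s) * Y := by rw [hY, ENNReal.mul_rpow_of_nonneg _ _ h1s0]
  -- Hölder
  have hGmeas : AEMeasurable G (volume.restrict Q) := by
    have : AEMeasurable b (volume.restrict Q) :=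
      (hb.aestronglyMeasurable.aemeasurable).restrict
    exact (aemeasurable_const.sub this).ennreal_ofReal
  have hH : ∫⁻ z in Q, G z ≤ (∫⁻ z in Q, G z ^ s) ^ (1/s) * v ^ (1 - 1/s) :=
    holder_one hs Q G hGmeas
  have hGFs : ∫⁻ z in Q, G z ^ s ≤ ∫⁻ z in Q, F z ^ s := by
    apply setLIntegral_mono' measurableSet_closedBall
    intro z hz
    exact ENNReal.rpow_le_rpow (hkey z hz) hs0.le
  have hGCv : ∫⁻ z in Q, G z ≤ C * (v * v ^ (β/(n:ℝ))) := by
    have e3 : v ^ (1/s) * v ^ (1 - 1/s) = v := by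
      rw [← ENNReal.rpow_add _ _ hv0 hvT]
      norm_num
    calc ∫⁻ z in Q, G z ≤ (∫⁻ z in Q, G z ^ s) ^ (1/s) * v ^ (1 - 1/s) := hH
      _ ≤ (∫⁻ z in Q, F z ^ s) ^ (1/s) * v ^ (1 - 1/s) := by
          gcongr
      _ = (v ^ (1/s) * Y) * v ^ (1 - 1/s) := by rw [hYeq]
      _ ≤ (v ^ (1/s) * (v ^ (β/(n:ℝ)) * C)) * v ^ (1 - 1/s) := by
          gcongr
      _ = C * (v * v ^ (β/(n:ℝ))) := by
          rw [show v ^ (1/s) * (v ^ (β/(n:ℝ)) * C) * v ^ (1 - 1/s)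
              = (v ^ (1/s) * v ^ (1 - 1/s)) * v ^ (β/(n:ℝ)) * C by ring, e3]
          ring
  have hRHSne : C * (v * v ^ (β/(n:ℝ))) ≠ ⊤ :=
    ENNReal.mul_ne_top hC (ENNReal.mul_ne_top hvT
      (ENNReal.rpow_ne_top_of_nonneg (by positivity) hvT))
  have hGne : (∫⁻ z in Q, G z) ≠ ⊤ := ne_top_of_le_ne_top hRHSne hGCv
  -- back to the real integral
  have hconst : IntegrableOn (fun _ => A) Q volume :=
    integrableOn_const hvT
  have hmax : IntegrableOn (fun z => max (A - b z) 0) Q volume := (hconst.sub hbi).pos_part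
  have hposint : ∫ z in Q, max (A - b z) 0 = (∫⁻ z in Q, G z).toReal := by
    have hm2 : AEStronglyMeasurable (fun z => max (A - b z) 0) (volume.restrict Q) :=
      hmax.aestronglyMeasurable
    have hpos : 0 ≤ᵐ[volume.restrict Q] (fun z => max (A - b z) 0) :=
      Filter.Eventually.of_forall fun z => le_max_right _ _
    have heq := integral_eq_lintegral_of_nonneg_ae (f := fun z => max (A - b z) 0)
      (μ := volume.restrict Q) hpos hm2
    rw [heq]
    congr 1
    apply lintegral_congr
    intro z
    show ENNReal.ofReal (max (A - b z) 0) = G z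
    rcases le_total (A - b z) 0 with h | h
    · rw [max_eq_right h, ENNReal.ofReal_zero, hG]
      exact (ENNReal.ofReal_of_nonpos h).symm
    · rw [max_eq_left h]
  have hzero : ∫ z in Q, (b z - A) = 0 := by
    rw [integral_sub hbi hconst, setIntegral_const, hA, avgB, setAverage_eq, smul_eq_mul,
      smul_eq_mul]
    rw [← hQ, measureReal_def, ← hv]
    field_simp
    simp
  have hptws : ∀ z, |b z - A| = 2 * max (A - b z) 0 + (b z - A) := by
    intro z
    rcases le_total (b z) A with h | h
    · have h1 : b z - A ≤ 0 := by linarith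
      have h2 : (0:ℝ) ≤ A - b z := by linarith
      rw [abs_of_nonpos h1, max_eq_left h2]
      ring
    · have h1 : (0:ℝ) ≤ b z - A := by linarith
      have h2 : A - b z ≤ 0 := by linarith
      rw [abs_of_nonneg h1, max_eq_right h2]
      ring
  have hintid : ∫ z in Q, |b z - A| = 2 * ∫ z in Q, max (A - b z) 0 := by
    calc ∫ z in Q, |b z - A| = ∫ z in Q, (2 * max (A - b z) 0 + (b z - A)) := by
          apply integral_congr_ae
          exact Filter.Eventually.of_forall fun z => hptws z
      _ = 2 * (∫ z in Q, max (A - b z) 0) + ∫ z in Q, (b z - A) := by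
          have hsubint : IntegrableOn (fun z => b z - A) Q volume := hbi.sub hconst
          have hmul : IntegrableOn (fun z => 2 * max (A - b z) 0) Q volume := hmax.const_mul 2
          rw [integral_add hmul hsubint, integral_const_mul]
      _ = 2 * ∫ z in Q, max (A - b z) 0 := by rw [hzero, add_zero]
  -- volume power computation
  have hvpow : (v ^ (β/(n:ℝ))).toReal = (2*r) ^ β := by
    rw [hvball, ENNReal.ofReal_rpow_of_pos (by positivity),
      ENNReal.toReal_ofReal (by positivity)]
    rw [← Real.rpow_natCast (2*r) n, ← Real.rpow_mul (by positivity)]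
    congr 1
    field_simp
  have hfinal : (∫⁻ z in Q, G z).toReal ≤ C.toReal * v.toReal * (2*r) ^ β := by
    have := ENNReal.toReal_mono hRHSne hGCv
    rwa [ENNReal.toReal_mul, ENNReal.toReal_mul, hvpow, ← mul_assoc] at this
  rw [hintid, hposint]
  have h2b : ((2:ℝ)*r) ^ β = (2:ℝ)^β * r ^ β := Real.mul_rpow (by norm_num) hr.le
  calc 2 * (∫⁻ z in Q, G z).toReal ≤ 2 * (C.toReal * v.toReal * (2*r) ^ β) := by linarith
    _ = (2 * C.toReal * (2:ℝ)^β) * r ^ β * v.toReal := by rw [h2b]; ring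

end Campanato

end Stmt14Aux

end Stmt14AuxSection

open Metric Filter Topology in
theorem stmt14 (n : ℕ) (α β : ℝ) (hα0 : 0 < α) (hαn : α < n)
    (hβ0 : 0 < β) (hβ1 : β < 1) (hαβn : α + β < n)
    (b : (Fin n → ℝ) → ℝ) (hb : LocallyIntegrable b volume)
    (s : ℝ) (hs : 1 ≤ s)
    (hsup : ∃ C : ℝ≥0∞, C ≠ ⊤ ∧ ∀ Q : Set (Fin n → ℝ), IsCube n Q →
      volume Q ^ (-(β / (n : ℝ))) *
        ((volume Q)⁻¹ *
          ∫⁻ x in Q, ((b x : EReal) -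
            ((volume Q ^ (-(α / (n : ℝ))) * localFracMax n α Q b x : ℝ≥0∞) : EReal)).abs ^ s)
          ^ (1 / s)
      ≤ C) :
    ∃ (L : ℝ) (g : (Fin n → ℝ) → ℝ), b =ᵐ[volume] g ∧
      ∀ x y, |g x - g y| ≤ L * dist x y ^ β := by
  classical
  obtain ⟨C, hC, hCQ⟩ := hsup
  set K : ℝ := 2 * C.toReal * (2:ℝ)^β with hKdef
  have hK0 : 0 ≤ K := by
    rw [hKdef]
    positivity
  have hK : ∀ (x : Fin n → ℝ) (r : ℝ), 0 < r →
      ∫ y in closedBall x r, |b y - Stmt14Aux.avgB n b x r| ≤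
        K * r ^ β * (volume (closedBall x r)).toReal := by
    intro x r hr
    exact Stmt14Aux.campanato_of_hsup hα0 hαn hβ0 hb hs hC hCQ x r hr
  refine ⟨(2^n*K/(1-(1/2:ℝ)^β) + 2^n*K) * ((2:ℝ)^β + 1) + 2^n*K*(2:ℝ)^β,
    Stmt14Aux.gfun n b, Stmt14Aux.gfun_ae_eq hβ0 hb hK0 hK, fun x y => ?_⟩
  exact Stmt14Aux.gfun_holder hβ0 hb hK0 hK x y
end
end

section
/- Let 0 < γ < n. If b is locally integrable and sup_Q |Q|^{−1}∫_Q |b(x) − |Q|^{−γ/n}M_{γ,Q}(b)(x)| dx < ∞, then b ∈ BMO(ℝⁿ). -/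
open MeasureTheory ENNReal Set

noncomputable section

lemma aux_abs (a : ℝ) (c : ℝ≥0∞) (v : ℝ) (hv : ENNReal.ofReal v ≤ c) :
    ENNReal.ofReal (max (v - a) 0) ≤ ((a : EReal) - (c : EReal)).abs := by
  rcases eq_or_ne c ⊤ with rfl | hc
  · simp [EReal.coe_ennreal_top, EReal.sub_top]
  · have hvr : v ≤ c.toReal := by
      calc v ≤ max v 0 := le_max_left _ _
      _ = (ENNReal.ofReal v).toReal := ENNReal.toReal_ofReal'.symm
      _ ≤ c.toReal := ENNReal.toReal_mono hc hv
    have hcbot : ((c : EReal)) ≠ ⊥ := ne_bot_of_le_ne_bot (by simp) (EReal.coe_ennreal_nonneg c)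
    have hctop : ((c : EReal)) ≠ ⊤ := by simp [hc]
    have hcc : ((c.toReal : ℝ) : EReal) = (c : EReal) := by
      rw [← EReal.toReal_coe_ennreal]
      exact EReal.coe_toReal hctop hcbot
    rw [← hcc, ← EReal.coe_sub, EReal.abs_def]
    apply ENNReal.ofReal_le_ofReal
    rcases le_total a v with hav | hav
    · rw [max_eq_left (by linarith), abs_sub_comm, abs_of_nonneg (by linarith)]; linarith
    · rw [max_eq_right (by linarith)]; positivity

theorem stmt15 (n : ℕ) (γ : ℝ) (hγ0 : 0 < γ) (hγn : γ < n)
    (b : (Fin n → ℝ) → ℝ) (hb : LocallyIntegrable b volume)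
    (hsup : ∃ C : ℝ≥0∞, C ≠ ⊤ ∧ ∀ Q : Set (Fin n → ℝ), IsCube n Q →
      (volume Q)⁻¹ *
        ∫⁻ x in Q, ((b x : EReal) -
          ((volume Q ^ (-(γ / (n : ℝ))) * localFracMax n γ Q b x : ℝ≥0∞) : EReal)).abs
      ≤ C) :
    ∃ C : ℝ, ∀ Q : Set (Fin n → ℝ), IsCube n Q →
      ∫ x in Q, |b x - cubeAvg n Q b| ≤ C * (volume Q).toReal := by
  obtain ⟨C₀, hC₀top, hC₀⟩ := hsup
  refine ⟨2 * C₀.toReal, fun Q hQ => ?_⟩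
  obtain ⟨c, h, hh, hQeq⟩ := hQ
  have hQcube : IsCube n Q := ⟨c, h, hh, hQeq⟩
  have hQmeas : MeasurableSet Q := by
    rw [hQeq]; exact MeasurableSet.univ_pi fun i => measurableSet_Icc
  have hQcompact : IsCompact Q := by
    rw [hQeq]; exact isCompact_univ_pi fun i => isCompact_Icc
  set m := volume Q with hm
  have hvol : m = ENNReal.ofReal h ^ n := by
    rw [hm, hQeq, volume_pi_pi]
    simp [Real.volume_Icc]
  have hm0 : m ≠ 0 := by
    rw [hvol]
    exact pow_ne_zero _ (ENNReal.ofReal_pos.2 hh).ne'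
  have hmtop : m ≠ ⊤ := by
    rw [hvol]; exact ENNReal.pow_ne_top ENNReal.ofReal_ne_top
  have hbi : IntegrableOn b Q volume := hb.integrableOn_isCompact hQcompact
  set avg := cubeAvg n Q b with havg
  set I := ∫⁻ x in Q, (‖b x‖₊ : ℝ≥0∞) with hI
  have hItop : I ≠ ⊤ := hbi.2.ne
  -- the average is dominated by m⁻¹ * I
  have havgle : avg ≤ (m⁻¹ * I).toReal := by
    have h1 : (∫ x in Q, b x) ≤ ∫ x in Q, ‖b x‖ := by
      apply integral_mono hbi hbi.norm
      intro x; exact le_abs_self _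
    have h2 : (∫ x in Q, ‖b x‖) = I.toReal :=
      integral_norm_eq_lintegral_enorm hbi.1
    rw [havg, cubeAvg, ENNReal.toReal_mul, ENNReal.toReal_inv]
    exact mul_le_mul_of_nonneg_left (h1.trans h2.le) (by positivity)
  -- pointwise lower bound on the local maximal function
  have hc : ∀ x ∈ Q, ENNReal.ofReal avg ≤ m ^ (-(γ / (n : ℝ))) * localFracMax n γ Q b x := by
    intro x hx
    have hloc : m ^ (γ / (n : ℝ) - 1) * I ≤ localFracMax n γ Q b x := by
      rw [localFracMax]
      exact le_iSup_of_le Q (le_iSup_of_le hQcube (le_iSup_of_le hx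
        (le_iSup_of_le subset_rfl le_rfl)))
    have hmul : m ^ (-(γ / (n : ℝ))) * (m ^ (γ / (n : ℝ) - 1) * I) = m⁻¹ * I := by
      rw [← mul_assoc, ← ENNReal.rpow_add _ _ hm0 hmtop]
      have he : -(γ / (n : ℝ)) + (γ / (n : ℝ) - 1) = -1 := by ring
      rw [he, ENNReal.rpow_neg_one]
    calc ENNReal.ofReal avg ≤ m⁻¹ * I := ENNReal.ofReal_le_of_le_toReal havgle
    _ = m ^ (-(γ / (n : ℝ))) * (m ^ (γ / (n : ℝ) - 1) * I) := hmul.symm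
    _ ≤ m ^ (-(γ / (n : ℝ))) * localFracMax n γ Q b x :=
        mul_le_mul_right hloc _
  set p := fun x => max (avg - b x) 0 with hp
  have hLbound : (∫⁻ x in Q, ENNReal.ofReal (p x)) ≤ C₀ * m := by
    have h1 : (∫⁻ x in Q, ENNReal.ofReal (p x)) ≤
        ∫⁻ x in Q, ((b x : EReal) -
          ((m ^ (-(γ / (n : ℝ))) * localFracMax n γ Q b x : ℝ≥0∞) : EReal)).abs := by
      refine lintegral_mono_ae ((ae_restrict_iff' hQmeas).2 (ae_of_all _ fun x hx => ?_))
      exact aux_abs (b x) _ avg (hc x hx)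
    have h2 := hC₀ Q hQcube
    calc (∫⁻ x in Q, ENNReal.ofReal (p x))
        ≤ ∫⁻ x in Q, ((b x : EReal) -
          ((m ^ (-(γ / (n : ℝ))) * localFracMax n γ Q b x : ℝ≥0∞) : EReal)).abs := h1
      _ = m * (m⁻¹ * ∫⁻ x in Q, ((b x : EReal) -
          ((m ^ (-(γ / (n : ℝ))) * localFracMax n γ Q b x : ℝ≥0∞) : EReal)).abs) := by
          rw [← mul_assoc, ENNReal.mul_inv_cancel hm0 hmtop, one_mul]
      _ ≤ m * C₀ := mul_le_mul_right h2 _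
      _ = C₀ * m := mul_comm _ _
  have hconst : IntegrableOn (fun _ => avg) Q volume := by
    exact integrableOn_const hmtop
  have hpint : IntegrableOn p Q volume := (hconst.sub hbi).pos_part
  have hpval : (∫ x in Q, p x) ≤ C₀.toReal * m.toReal := by
    have h1 : (∫ x in Q, p x) = (∫⁻ x in Q, ENNReal.ofReal (p x)).toReal :=
      integral_eq_lintegral_of_nonneg_ae (ae_of_all _ fun x => le_max_right _ _) hpint.1
    rw [h1, ← ENNReal.toReal_mul]
    exact ENNReal.toReal_mono (ENNReal.mul_ne_top hC₀top hmtop) hLbound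
  have hzero : (∫ x in Q, (b x - avg)) = 0 := by
    rw [integral_sub hbi hconst, setIntegral_const, smul_eq_mul, havg, cubeAvg]
    have : (volume Q).toReal ≠ 0 := ENNReal.toReal_ne_zero.2 ⟨hm0, hmtop⟩
    rw [Measure.real]
    field_simp
    simp
  have hsplit : (∫ x in Q, |b x - avg|) = 2 * ∫ x in Q, p x := by
    have hpoint : ∀ x, |b x - avg| = 2 * p x + (b x - avg) := by
      intro x
      show |b x - avg| = 2 * max (avg - b x) 0 + (b x - avg)
      rcases le_total avg (b x) with hle | hle
      · rw [max_eq_right (by linarith), abs_of_nonneg (by linarith)]; ring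
      · rw [max_eq_left (by linarith), abs_of_nonpos (by linarith)]; ring
    calc (∫ x in Q, |b x - avg|) = ∫ x in Q, (2 * p x + (b x - avg)) := by
          exact integral_congr_ae (ae_of_all _ hpoint)
      _ = (∫ x in Q, 2 * p x) + ∫ x in Q, (b x - avg) :=
          integral_add (hpint.const_mul 2)
            (by exact hbi.sub hconst : IntegrableOn (fun x => b x - avg) Q volume)
      _ = 2 * (∫ x in Q, p x) + ∫ x in Q, (b x - avg) := by rw [integral_const_mul]
      _ = 2 * ∫ x in Q, p x := by rw [hzero, add_zero]
  calc (∫ x in Q, |b x - avg|) = 2 * ∫ x in Q, p x := hsplit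
    _ ≤ 2 * (C₀.toReal * m.toReal) := by linarith
    _ = 2 * C₀.toReal * (volume Q).toReal := by rw [hm]; ring
end
end

section
/- Let 0 < α < n, 1 < p < n/α, 1/q = 1/p − α/n. If b ∈ BMO(ℝⁿ) with b⁻ ∈ L^∞(ℝⁿ) fails (i.e., b⁻ is unbounded) or b ∉ BMO, then [b,M_α] is not bounded from L^p to L^q; equivalently, if [b,M_α] is bounded from L^p(ℝⁿ) to L^q(ℝⁿ), then sup_Q |Q|^{−1}∫_Q |b(x) − |Q|^{−α/n}M_{α,Q}(b)(x)| dx < ∞. -/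
open MeasureTheory ENNReal Set

noncomputable section

def cube (n : ℕ) (c : Fin n → ℝ) (h : ℝ) : Set (Fin n → ℝ) :=
  Set.univ.pi fun i => Set.Icc (c i) (c i + h)

lemma mem_cube {n : ℕ} {c : Fin n → ℝ} {h : ℝ} {x : Fin n → ℝ} :
    x ∈ cube n c h ↔ ∀ i, c i ≤ x i ∧ x i ≤ c i + h := by
  simp only [cube, Set.mem_univ_pi, Set.mem_Icc]

lemma cube_isCube {n : ℕ} (c : Fin n → ℝ) {h : ℝ} (hh : 0 < h) : IsCube n (cube n c h) :=
  ⟨c, h, hh, rfl⟩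

lemma volume_cube {n : ℕ} (c : Fin n → ℝ) {h : ℝ} (hh : 0 ≤ h) :
    volume (cube n c h) = ENNReal.ofReal h ^ n := by
  rw [cube, volume_pi_pi]
  simp [Real.volume_Icc]

lemma cube_measurable {n : ℕ} (c : Fin n → ℝ) (h : ℝ) : MeasurableSet (cube n c h) :=
  (isClosed_set_pi (fun i _ => isClosed_Icc)).measurableSet

lemma subcube {n : ℕ} {c c' : Fin n → ℝ} {h h' : ℝ} (hh : 0 < h) (hh' : 0 < h')
    {x : Fin n → ℝ} (hx : x ∈ cube n c' h' ∩ cube n c h) :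
    ∃ d : Fin n → ℝ, x ∈ cube n d (min h h') ∧ cube n d (min h h') ⊆ cube n c h ∧
      cube n c' h' ∩ cube n c h ⊆ cube n d (min h h') := by
  set m := min h h' with hm
  have hm0 : 0 < m := lt_min hh hh'
  have hmh : m ≤ h := min_le_left _ _
  set d : Fin n → ℝ := fun i => min (max (c i) (c' i)) (c i + h - m) with hd
  have key : cube n c' h' ∩ cube n c h ⊆ cube n d m := by
    rintro y ⟨hy1, hy2⟩
    rw [mem_cube] at hy1 hy2 ⊢
    intro i
    obtain ⟨h1a, h1b⟩ := hy1 i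
    obtain ⟨h2a, h2b⟩ := hy2 i
    refine ⟨le_trans (min_le_left _ _) (max_le h2a h1a), ?_⟩
    rcases le_total (max (c i) (c' i)) (c i + h - m) with hc | hc
    · rw [hd]
      simp only [min_eq_left hc]
      rcases min_cases h h' with ⟨hmm, _⟩ | ⟨hmm, _⟩
      · rw [hm, hmm]
        exact le_trans h2b (by simp [le_max_left])
      · rw [hm, hmm]
        exact le_trans h1b (by simp [le_max_right])
    · rw [hd]
      simp only [min_eq_right hc]
      linarith
  have hsub : cube n d m ⊆ cube n c h := by
    intro z hz
    rw [mem_cube] at hz ⊢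
    intro i
    obtain ⟨hz1, hz2⟩ := hz i
    constructor
    · refine le_trans ?_ hz1
      rw [hd]
      exact le_min (le_max_left _ _) (by linarith)
    · refine le_trans hz2 ?_
      have : d i ≤ c i + h - m := min_le_right _ _
      linarith
  exact ⟨d, key hx, hsub, key⟩


lemma rpow_anti_s19 {x y : ℝ≥0∞} {z : ℝ} (h : x ≤ y) (hz : z ≤ 0) : y ^ z ≤ x ^ z := by
  have h1 : y ^ z = (y ^ (-z))⁻¹ := by rw [← ENNReal.rpow_neg, neg_neg]
  have h2 : x ^ z = (x ^ (-z))⁻¹ := by rw [← ENNReal.rpow_neg, neg_neg]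
  rw [h1, h2]
  exact ENNReal.inv_le_inv.mpr (ENNReal.rpow_le_rpow h (neg_nonneg.mpr hz))

lemma pow_rpow (h : ℝ) (n : ℕ) (e : ℝ) :
    (ENNReal.ofReal h ^ n) ^ e = ENNReal.ofReal h ^ ((n : ℝ) * e) := by
  rw [ENNReal.rpow_mul, ENNReal.rpow_natCast]


lemma lintegral_indicator_one {n : ℕ} {s Q : Set (Fin n → ℝ)} (hs : MeasurableSet s) :
    (∫⁻ y in Q, ‖Set.indicator s (fun _ => (1:ℝ)) y‖₊) = volume (s ∩ Q) := by
  have : (fun y => (‖Set.indicator s (fun _ => (1:ℝ)) y‖₊ : ℝ≥0∞))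
      = Set.indicator s (fun _ => (1:ℝ≥0∞)) := by
    funext y
    by_cases hy : y ∈ s <;> simp [Set.indicator_apply, hy]
  rw [this, MeasureTheory.lintegral_indicator hs, Measure.restrict_restrict hs,
    MeasureTheory.setLIntegral_one]

lemma lintegral_mul_indicator {n : ℕ} {s Q : Set (Fin n → ℝ)} (hs : MeasurableSet s)
    (b : (Fin n → ℝ) → ℝ) :
    (∫⁻ y in Q, ‖b y * Set.indicator s (fun _ => (1:ℝ)) y‖₊) = ∫⁻ y in s ∩ Q, ‖b y‖₊ := by
  have : (fun y => (‖b y * Set.indicator s (fun _ => (1:ℝ)) y‖₊ : ℝ≥0∞))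
      = Set.indicator s (fun y => (‖b y‖₊ : ℝ≥0∞)) := by
    funext y
    by_cases hy : y ∈ s <;> simp [Set.indicator_apply, hy]
  rw [this, MeasureTheory.lintegral_indicator hs, Measure.restrict_restrict hs]

lemma vol_cube_ne_zero {n : ℕ} (c : Fin n → ℝ) {h : ℝ} (hh : 0 < h) :
    volume (cube n c h) ≠ 0 := by
  rw [volume_cube c hh.le]
  exact pow_ne_zero _ (by simp [hh.le, hh, ENNReal.ofReal_eq_zero, not_le])

lemma vol_cube_ne_top {n : ℕ} (c : Fin n → ℝ) {h : ℝ} (hh : 0 < h) :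
    volume (cube n c h) ≠ ⊤ := by
  rw [volume_cube c hh.le]
  exact pow_ne_top ofReal_ne_top

lemma term_le_indicator {n : ℕ} (hn : 0 < n) {α : ℝ} (hα0 : 0 < α) (hαn : α < n)
    {c c' : Fin n → ℝ} {h h' : ℝ} (hh : 0 < h) (hh' : 0 < h') {x : Fin n → ℝ}
    (hx : x ∈ cube n c h) (hx' : x ∈ cube n c' h') :
    volume (cube n c' h') ^ (α / n - 1) *
      (∫⁻ y in cube n c' h', ‖(cube n c h).indicator (fun _ => (1:ℝ)) y‖₊)
      ≤ volume (cube n c h) ^ (α / n) := by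
  have hn' : (n : ℝ) ≠ 0 := Nat.cast_ne_zero.mpr hn.ne'
  set m := min h h' with hm
  have hm0 : 0 < m := lt_min hh hh'
  obtain ⟨d, hxd, hdsub, hkey⟩ := subcube hh hh' ⟨hx', hx⟩
  rw [_root_.lintegral_indicator_one (cube_measurable c h), volume_cube c' hh'.le]
  have hv : volume (cube n c h ∩ cube n c' h') ≤ ENNReal.ofReal m ^ n := by
    rw [← volume_cube d hm0.le]
    exact measure_mono (by rw [Set.inter_comm]; exact hkey)
  have hexp : (n : ℝ) * (α / n - 1) = α - n := by field_simp
  have h1 : (ENNReal.ofReal h' ^ n) ^ (α / n - 1) ≤ ENNReal.ofReal m ^ (α - n : ℝ) := by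
    rw [pow_rpow, hexp]
    exact rpow_anti_s19 (ENNReal.ofReal_le_ofReal (min_le_right _ _)) (by linarith)
  calc (ENNReal.ofReal h' ^ n) ^ (α / n - 1) * volume (cube n c h ∩ cube n c' h')
      ≤ ENNReal.ofReal m ^ (α - n : ℝ) * ENNReal.ofReal m ^ (n : ℝ) := by
        refine mul_le_mul' h1 ?_
        rw [ENNReal.rpow_natCast]
        exact hv
    _ = ENNReal.ofReal m ^ (α : ℝ) := by
        rw [← ENNReal.rpow_add _ _ (by simp [ENNReal.ofReal_eq_zero, not_le, hm0]) ofReal_ne_top]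
        norm_num
    _ ≤ ENNReal.ofReal h ^ (α : ℝ) := ENNReal.rpow_le_rpow
        (ENNReal.ofReal_le_ofReal (min_le_left _ _)) hα0.le
    _ = volume (cube n c h) ^ (α / n) := by
        rw [volume_cube c hh.le, pow_rpow]
        congr 1
        field_simp

lemma fracMax_indicator {n : ℕ} (hn : 0 < n) {α : ℝ} (hα0 : 0 < α) (hαn : α < n)
    {c : Fin n → ℝ} {h : ℝ} (hh : 0 < h) {x : Fin n → ℝ} (hx : x ∈ cube n c h) :
    fracMax n α ((cube n c h).indicator fun _ => (1:ℝ)) x = volume (cube n c h) ^ (α / n) := by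
  apply le_antisymm
  · refine iSup_le fun Q => iSup_le fun hQ => iSup_le fun hxQ => ?_
    obtain ⟨c', h', hh', rfl⟩ := hQ
    exact term_le_indicator hn hα0 hαn hh hh' hx hxQ
  · have hterm : volume (cube n c h) ^ (α / n)
        = volume (cube n c h) ^ (α / n - 1) *
          ∫⁻ y in cube n c h, ‖(cube n c h).indicator (fun _ => (1:ℝ)) y‖₊ := by
      rw [_root_.lintegral_indicator_one (cube_measurable c h), Set.inter_self]
      calc volume (cube n c h) ^ (α / n)
          = volume (cube n c h) ^ (α / n - 1 + 1) := by norm_num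
        _ = volume (cube n c h) ^ (α / n - 1) * volume (cube n c h) ^ (1:ℝ) :=
            ENNReal.rpow_add _ _ (vol_cube_ne_zero c hh) (vol_cube_ne_top c hh)
        _ = volume (cube n c h) ^ (α / n - 1) * volume (cube n c h) := by
            rw [ENNReal.rpow_one]
    rw [hterm]
    exact le_iSup_of_le (cube n c h) (le_iSup_of_le (cube_isCube c hh) (le_iSup_of_le hx le_rfl))

lemma fracMax_mul_indicator {n : ℕ} (hn : 0 < n) {α : ℝ} (hα0 : 0 < α) (hαn : α < n)
    {c : Fin n → ℝ} {h : ℝ} (hh : 0 < h) {x : Fin n → ℝ} (hx : x ∈ cube n c h)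
    (b : (Fin n → ℝ) → ℝ) :
    fracMax n α (fun y => b y * (cube n c h).indicator (fun _ => (1:ℝ)) y) x
      = localFracMax n α (cube n c h) b x := by
  apply le_antisymm
  · refine iSup_le fun Q => iSup_le fun hQ => iSup_le fun hxQ => ?_
    obtain ⟨c', h', hh', rfl⟩ := hQ
    show volume (cube n c' h') ^ (α / n - 1) *
      (∫⁻ y in cube n c' h', ‖b y * (cube n c h).indicator (fun _ => (1:ℝ)) y‖₊) ≤ _
    rw [lintegral_mul_indicator (cube_measurable c h) b]
    set m := min h h' with hm
    have hm0 : 0 < m := lt_min hh hh'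
    obtain ⟨d, hxd, hdsub, hkey⟩ := subcube hh hh' ⟨hxQ, hx⟩
    have hint : (∫⁻ y in cube n c h ∩ cube n c' h', ‖b y‖₊) ≤ ∫⁻ y in cube n d m, ‖b y‖₊ :=
      lintegral_mono_set (by rw [Set.inter_comm]; exact hkey)
    have hvol : volume (cube n c' h') ^ (α / n - 1) ≤ volume (cube n d m) ^ (α / n - 1) := by
      refine rpow_anti_s19 ?_ ?_
      · rw [volume_cube d hm0.le, volume_cube c' hh'.le]
        exact pow_le_pow_left' (ENNReal.ofReal_le_ofReal (min_le_right _ _)) n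
      · have : α / n < 1 := by
          rw [div_lt_one (by exact_mod_cast hn)]
          exact hαn
        linarith
    refine le_trans (mul_le_mul' hvol hint) ?_
    exact le_iSup_of_le (cube n d m) (le_iSup_of_le (cube_isCube d hm0)
      (le_iSup_of_le hxd (le_iSup_of_le hdsub le_rfl)))
  · refine iSup_le fun Q => iSup_le fun hQ => iSup_le fun hxQ => iSup_le fun hQsub => ?_
    obtain ⟨c', h', hh', rfl⟩ := hQ
    have : (∫⁻ y in cube n c' h', ‖b y‖₊)
        = ∫⁻ y in cube n c' h', ‖b y * (cube n c h).indicator (fun _ => (1:ℝ)) y‖₊ := by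
      rw [lintegral_mul_indicator (cube_measurable c h) b,
        Set.inter_eq_self_of_subset_right (show cube n c' h' ⊆ cube n c h from hQsub)]
    show volume (cube n c' h') ^ (α / n - 1) * (∫⁻ y in cube n c' h', ‖b y‖₊) ≤ _
    rw [this]
    exact le_iSup_of_le (cube n c' h') (le_iSup_of_le (cube_isCube c' hh')
      (le_iSup_of_le hxQ le_rfl))

lemma rpow_ne_top_aux {x : ℝ≥0∞} (hx : x ≠ 0) (hx' : x ≠ ⊤) (z : ℝ) : x ^ z ≠ ⊤ := by
  rcases le_or_gt 0 z with hz | hz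
  · exact (ENNReal.rpow_lt_top_of_nonneg hz hx').ne
  · have h1 : x ^ z = (x ^ (-z))⁻¹ := by rw [← ENNReal.rpow_neg, neg_neg]
    rw [h1, Ne, ENNReal.inv_eq_top]
    exact (ENNReal.rpow_pos (pos_iff_ne_zero.mpr hx) hx').ne'

lemma closedBall_eq_cube {n : ℕ} (x : Fin n → ℝ) {r : ℝ} (hr : 0 ≤ r) :
    Metric.closedBall x r = cube n (fun i => x i - r) (2 * r) := by
  rw [closedBall_pi x hr, cube]
  refine Set.pi_congr rfl fun i _ => ?_
  rw [Real.closedBall_eq_Icc]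
  congr 1
  ring

lemma ae_fracMax_lt_top {n : ℕ} (hn : 0 < n) {α : ℝ} (hα0 : 0 < α) (hαn : α < n)
    (g : (Fin n → ℝ) → ℝ) (hg : Integrable g volume) :
    ∀ᵐ x : Fin n → ℝ, fracMax n α g x < ⊤ := by
  have hn' : (n : ℝ) ≠ 0 := Nat.cast_ne_zero.mpr hn.ne'
  have hgl : LocallyIntegrable (fun y => ‖g y‖) volume := hg.norm.locallyIntegrable
  filter_upwards [IsUnifLocDoublingMeasure.ae_tendsto_average (μ := volume) hgl 1] with x hx
  have T : Filter.Tendsto (fun r : ℝ => ⨍ y in Metric.closedBall x r, ‖g y‖)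
      (nhdsWithin 0 (Set.Ioi 0)) (nhds ‖g x‖) := by
    refine hx (fun _ => x) id Filter.tendsto_id ?_
    filter_upwards [self_mem_nhdsWithin] with r hr
    exact Metric.mem_closedBall_self (by simp only [one_mul]; exact le_of_lt hr)
  have hev : ∀ᶠ r in nhdsWithin 0 (Set.Ioi 0),
      (⨍ y in Metric.closedBall x r, ‖g y‖) < ‖g x‖ + 1 :=
    T.eventually_lt_const (lt_add_one _)
  obtain ⟨ε, hε0, hεP⟩ : ∃ ε > 0, ∀ r : ℝ, 0 < r → r < ε →
      (⨍ y in Metric.closedBall x r, ‖g y‖) < ‖g x‖ + 1 := by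
    rcases Metric.mem_nhdsWithin_iff.mp hev with ⟨ε, hε, hsub⟩
    exact ⟨ε, hε, fun r h1 h2 => hsub
      ⟨by simpa [Real.dist_eq, abs_of_pos h1] using h2, h1⟩⟩
  set I := ∫⁻ y, (‖g y‖₊ : ℝ≥0∞) ∂volume with hI
  have hIfin : I ≠ ⊤ := hg.hasFiniteIntegral.ne
  set t := ε / 2 with ht
  have ht0 : 0 < t := by positivity
  have htne : ENNReal.ofReal t ≠ 0 := by simp [ENNReal.ofReal_eq_zero, not_le, ht0]
  set M : ℝ≥0∞ := max (ENNReal.ofReal t ^ (α - n : ℝ) * I)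
    ((2 : ℝ≥0∞) ^ n * ENNReal.ofReal t ^ (α : ℝ) * ENNReal.ofReal (‖g x‖ + 1)) with hM
  have hMfin : M < ⊤ := by
    rw [hM, max_lt_iff]
    constructor
    · exact ENNReal.mul_lt_top
        (lt_top_iff_ne_top.mpr (rpow_ne_top_aux htne ofReal_ne_top _))
        (lt_top_iff_ne_top.mpr hIfin)
    · exact ENNReal.mul_lt_top
        (ENNReal.mul_lt_top (pow_lt_top (by norm_num))
          (lt_top_iff_ne_top.mpr (rpow_ne_top_aux htne ofReal_ne_top _)))
        ofReal_lt_top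
  refine lt_of_le_of_lt ?_ hMfin
  refine iSup_le fun Q => iSup_le fun hQ => iSup_le fun hxQ => ?_
  obtain ⟨c', h', hh', rfl⟩ := hQ
  replace hxQ : x ∈ cube n c' h' := hxQ
  show volume (cube n c' h') ^ (α / n - 1) * (∫⁻ y in cube n c' h', ‖g y‖₊) ≤ M
  have hvol : volume (cube n c' h') ^ (α / n - 1) = ENNReal.ofReal h' ^ (α - n : ℝ) := by
    rw [volume_cube c' hh'.le, pow_rpow]
    congr 1
    field_simp
  rcases le_or_gt t h' with hcase | hcase
  · refine le_trans ?_ (le_max_left _ _)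
    rw [hvol]
    exact mul_le_mul' (rpow_anti_s19 (ENNReal.ofReal_le_ofReal hcase) (by linarith))
      (MeasureTheory.setLIntegral_le_lintegral _ _)
  · -- small cube: compare with the closed ball of radius h'
    have hQsub : cube n c' h' ⊆ Metric.closedBall x h' := by
      rw [closedBall_eq_cube x hh'.le]
      intro z hz
      rw [mem_cube] at hz ⊢
      rw [mem_cube] at hxQ
      intro i
      obtain ⟨hz1, hz2⟩ := hz i
      obtain ⟨hx1, hx2⟩ := hxQ i
      constructor <;> [linarith; linarith]
    have hvolB : volume (Metric.closedBall x h') = ENNReal.ofReal (2 * h') ^ n := by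
      rw [closedBall_eq_cube x hh'.le, volume_cube _ (by linarith)]
    have hvolBfin : volume (Metric.closedBall x h') ≠ ⊤ := by
      rw [hvolB]; exact pow_ne_top ofReal_ne_top
    have havg : (⨍ y in Metric.closedBall x h', ‖g y‖) ≤ ‖g x‖ + 1 :=
      (hεP h' hh' (by rw [ht] at hcase; linarith)).le
    have hint : (∫⁻ y in cube n c' h', (‖g y‖₊ : ℝ≥0∞))
        ≤ ENNReal.ofReal (‖g x‖ + 1) * ENNReal.ofReal (2 * h') ^ n := by
      calc (∫⁻ y in cube n c' h', (‖g y‖₊ : ℝ≥0∞))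
          ≤ ∫⁻ y in Metric.closedBall x h', (‖g y‖₊ : ℝ≥0∞) := lintegral_mono_set hQsub
        _ = ENNReal.ofReal (∫ y in Metric.closedBall x h', ‖g y‖) :=
            (ofReal_integral_norm_eq_lintegral_enorm hg.integrableOn).symm
        _ ≤ ENNReal.ofReal ((‖g x‖ + 1) * (volume (Metric.closedBall x h')).toReal) := by
            apply ENNReal.ofReal_le_ofReal
            have := setAverage_eq (μ := volume) (fun y => ‖g y‖) (Metric.closedBall x h')
            rw [smul_eq_mul] at this
            have h2 : (∫ y in Metric.closedBall x h', ‖g y‖)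
                = (volume (Metric.closedBall x h')).toReal
                  * ⨍ y in Metric.closedBall x h', ‖g y‖ := by
              rw [this]
              rw [measureReal_def, ← mul_assoc, mul_inv_cancel₀, one_mul]
              refine ne_of_gt (ENNReal.toReal_pos ?_ hvolBfin)
              rw [hvolB]
              exact pow_ne_zero _ (by simp [ENNReal.ofReal_eq_zero, not_le]; linarith)
            rw [h2, mul_comm]
            have hvpos : 0 ≤ (volume (Metric.closedBall x h')).toReal := ENNReal.toReal_nonneg
            exact mul_le_mul_of_nonneg_right havg hvpos
        _ = ENNReal.ofReal (‖g x‖ + 1) * ENNReal.ofReal (2 * h') ^ n := by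
            rw [ENNReal.ofReal_mul (by positivity), ENNReal.ofReal_toReal hvolBfin, hvolB]
    refine le_trans ?_ (le_max_right _ _)
    rw [hvol]
    calc ENNReal.ofReal h' ^ (α - n : ℝ) * (∫⁻ y in cube n c' h', (‖g y‖₊ : ℝ≥0∞))
        ≤ ENNReal.ofReal h' ^ (α - n : ℝ)
          * (ENNReal.ofReal (‖g x‖ + 1) * ENNReal.ofReal (2 * h') ^ n) := mul_le_mul' le_rfl hint
      _ = (2:ℝ≥0∞) ^ n * (ENNReal.ofReal h' ^ (α - n : ℝ) * ENNReal.ofReal h' ^ (n : ℝ))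
          * ENNReal.ofReal (‖g x‖ + 1) := by
          rw [ENNReal.ofReal_mul (by norm_num : (0:ℝ) ≤ 2), mul_pow, ENNReal.ofReal_ofNat,
            ENNReal.rpow_natCast]
          ring
      _ = (2:ℝ≥0∞) ^ n * ENNReal.ofReal h' ^ (α : ℝ) * ENNReal.ofReal (‖g x‖ + 1) := by
          rw [← ENNReal.rpow_add _ _ (by simp [ENNReal.ofReal_eq_zero, not_le, hh']) ofReal_ne_top]
          norm_num
      _ ≤ (2:ℝ≥0∞) ^ n * ENNReal.ofReal t ^ (α : ℝ) * ENNReal.ofReal (‖g x‖ + 1) := by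
          refine mul_le_mul' (mul_le_mul' le_rfl ?_) le_rfl
          exact ENNReal.rpow_le_rpow (ENNReal.ofReal_le_ofReal hcase.le) hα0.le

lemma lintegral_le_rpow_mul {X : Type*} [MeasurableSpace X] (μ : Measure X) {qr : ℝ}
    (hq : 1 < qr) (u : X → ℝ≥0∞) :
    ∫⁻ x, u x ∂μ ≤ (∫⁻ x, u x ^ qr ∂μ) ^ (1 / qr) * (μ Set.univ) ^ (1 - 1 / qr) := by
  obtain ⟨g, hgm, hgle, hgeq⟩ := MeasureTheory.exists_measurable_le_lintegral_eq μ u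
  rw [hgeq]
  have hconj : Real.HolderConjugate qr (Real.conjExponent qr) :=
    Real.HolderConjugate.conjExponent hq
  have hq0 : qr ≠ 0 := by positivity
  have H := ENNReal.lintegral_mul_le_Lp_mul_Lq μ hconj (f := g) (g := fun _ => (1:ℝ≥0∞))
    hgm.aemeasurable aemeasurable_const
  calc ∫⁻ x, g x ∂μ = ∫⁻ x, g x * (1:ℝ≥0∞) ∂μ := by simp
    _ ≤ (∫⁻ x, g x ^ qr ∂μ) ^ (1 / qr)
        * (∫⁻ x, (1:ℝ≥0∞) ^ Real.conjExponent qr ∂μ) ^ (1 / Real.conjExponent qr) := H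
    _ ≤ (∫⁻ x, u x ^ qr ∂μ) ^ (1 / qr) * (μ Set.univ) ^ (1 - 1 / qr) := by
      refine mul_le_mul' ?_ ?_
      · refine ENNReal.rpow_le_rpow ?_ (by positivity)
        exact lintegral_mono fun x => ENNReal.rpow_le_rpow (hgle x) (by positivity)
      · simp only [ENNReal.one_rpow, MeasureTheory.lintegral_one]
        refine le_of_eq ?_
        congr 1
        rw [one_div, Real.HolderConjugate.conjugate_eq hconj]
        field_simp


lemma ereal_coe_ennreal (w : ℝ≥0∞) (hw : w ≠ ⊤) : (w : EReal) = ((w.toReal : ℝ) : EReal) := by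
  rw [← EReal.toReal_coe_ennreal, EReal.coe_toReal (by simpa using hw) (by simp)]



theorem stmt19 (n : ℕ) (α p q : ℝ) (hα0 : 0 < α) (hαn : α < n)
    (hp1 : 1 < p) (hp2 : p < n / α) (hq : 1 / q = 1 / p - α / n)
    (b : (Fin n → ℝ) → ℝ) (hb : LocallyIntegrable b volume)
    (hbound : ∃ K : ℝ≥0∞, K ≠ ⊤ ∧ ∀ f : (Fin n → ℝ) → ℝ,
      MemLp f (ENNReal.ofReal p) volume →
      eLpNorm (fun x => ncomm n α b f x) (ENNReal.ofReal q) volume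
        ≤ K * eLpNorm f (ENNReal.ofReal p) volume) :
    ∃ C : ℝ≥0∞, C ≠ ⊤ ∧ ∀ Q : Set (Fin n → ℝ), IsCube n Q →
      (volume Q)⁻¹ *
        ∫⁻ x in Q, ((b x : EReal) -
          ((volume Q ^ (-(α / (n : ℝ))) * localFracMax n α Q b x : ℝ≥0∞) : EReal)).abs
      ≤ C := by
  obtain ⟨K, hK, hKb⟩ := hbound
  have hnR : (0:ℝ) < n := lt_trans hα0 hαn
  have hn : 0 < n := by exact_mod_cast hnR
  have hn' : (n:ℝ) ≠ 0 := ne_of_gt hnR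
  have hp0 : 0 < p := lt_trans one_pos hp1
  have hkey : α / n < 1 / p := by
    rw [div_lt_div_iff₀ hnR hp0]
    have := (lt_div_iff₀ hα0).mp hp2
    nlinarith
  have hiq : 0 < 1 / q := by rw [hq]; linarith
  have hqpos : 0 < q := one_div_pos.mp hiq
  have hq1 : 1 < q := by
    have h1 : 1 / q < 1 := by
      rw [hq]
      have : α / n > 0 := div_pos hα0 hnR
      have : 1 / p < 1 := by rw [div_lt_one hp0]; exact hp1
      linarith [div_pos hα0 hnR]
    rw [div_lt_one hqpos] at h1
    exact h1
  refine ⟨K, hK, ?_⟩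
  intro Q hQ
  obtain ⟨c, h, hh, rfl⟩ := hQ
  show (volume (cube n c h))⁻¹ *
      ∫⁻ x in cube n c h, ((b x : EReal) -
        ((volume (cube n c h) ^ (-(α / (n : ℝ))) * localFracMax n α (cube n c h) b x : ℝ≥0∞)
          : EReal)).abs ≤ K
  set Q₀ := cube n c h with hQ₀
  set f : (Fin n → ℝ) → ℝ := Q₀.indicator (fun _ => (1:ℝ)) with hf
  have hv0 := vol_cube_ne_zero c hh
  have hvt := vol_cube_ne_top c hh
  have hmem : MemLp f (ENNReal.ofReal p) volume :=
    memLp_indicator_const _ (cube_measurable c h) 1 (Or.inr hvt)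
  have hKQ := hKb f hmem
  have hpne0 : ENNReal.ofReal p ≠ 0 := by simp [ENNReal.ofReal_eq_zero, not_le, hp0]
  have hqne0 : ENNReal.ofReal q ≠ 0 := by simp [ENNReal.ofReal_eq_zero, not_le, hqpos]
  have hfnorm : eLpNorm f (ENNReal.ofReal p) volume = volume Q₀ ^ (1/p) := by
    rw [hf, eLpNorm_indicator_const (cube_measurable c h) hpne0 ofReal_ne_top]
    simp [ENNReal.toReal_ofReal hp0.le]
    rfl
  have hbint : Integrable (fun y => b y * f y) volume := by
    have hcomp : IsCompact Q₀ := isCompact_univ_pi fun i => isCompact_Icc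
    have hint : IntegrableOn b Q₀ volume := hb.integrableOn_isCompact hcomp
    have : (fun y => b y * f y) = Q₀.indicator b := by
      funext y
      by_cases hy : y ∈ Q₀ <;> simp [hf, Set.indicator_apply, hy]
    rw [this]
    exact hint.integrable_indicator (cube_measurable c h)
  have hae := ae_fracMax_lt_top hn hα0 hαn _ hbint
  set V := volume Q₀ ^ (α / (n:ℝ)) with hV
  have hV0 : V ≠ 0 := (ENNReal.rpow_pos (pos_iff_ne_zero.mpr hv0) hvt).ne'
  have hVtop : V ≠ ⊤ := rpow_ne_top_aux hv0 hvt _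
  have hW : volume Q₀ ^ (-(α/(n:ℝ))) = V⁻¹ := by rw [hV, ENNReal.rpow_neg]
  have hVpos : 0 < V.toReal := ENNReal.toReal_pos hV0 hVtop
  have hpt : ∀ᵐ x ∂(volume.restrict Q₀),
      ((b x : EReal) - ((volume Q₀ ^ (-(α/(n:ℝ))) * localFracMax n α Q₀ b x : ℝ≥0∞) : EReal)).abs
        = V⁻¹ * (‖ncomm n α b f x‖₊ : ℝ≥0∞) := by
    filter_upwards [ae_restrict_of_ae hae, ae_restrict_mem (cube_measurable c h)] with x hfin hxQ
    have e1 : fracMax n α f x = V := fracMax_indicator hn hα0 hαn hh hxQ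
    have e2 : localFracMax n α Q₀ b x = fracMax n α (fun y => b y * f y) x :=
      (fracMax_mul_indicator hn hα0 hαn hh hxQ b).symm
    set F := fracMax n α (fun y => b y * f y) x with hF
    have hFne : F ≠ ⊤ := hfin.ne
    have hVinvne : V⁻¹ ≠ ⊤ := by rwa [Ne, ENNReal.inv_eq_top]
    have hprodne : V⁻¹ * F ≠ ⊤ := ENNReal.mul_ne_top hVinvne hFne
    rw [hW, e2, ereal_coe_ennreal _ hprodne, ← EReal.coe_sub, EReal.abs_def]
    have e3 : ncomm n α b f x = b x * V.toReal - F.toReal := by rw [ncomm, e1]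
    have e4 : (V⁻¹ * F).toReal = V.toReal⁻¹ * F.toReal := by
      rw [ENNReal.toReal_mul, ENNReal.toReal_inv]
    have e5 : b x - (V⁻¹ * F).toReal = V.toReal⁻¹ * (b x * V.toReal - F.toReal) := by
      rw [e4]
      field_simp
    rw [e5, abs_mul, abs_of_pos (inv_pos.mpr hVpos), ENNReal.ofReal_mul (by positivity), e3]
    congr 1
    · rw [ENNReal.ofReal_inv_of_pos hVpos, ENNReal.ofReal_toReal hVtop]
    · rw [← Real.enorm_eq_ofReal_abs, enorm_eq_nnnorm]
  rw [lintegral_congr_ae hpt, lintegral_const_mul' _ _ (by rwa [Ne, ENNReal.inv_eq_top])]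
  have hHolder : (∫⁻ x in Q₀, (‖ncomm n α b f x‖₊ : ℝ≥0∞))
      ≤ eLpNorm (fun x => ncomm n α b f x) (ENNReal.ofReal q) volume
        * volume Q₀ ^ (1 - 1/q) := by
    refine le_trans (lintegral_le_rpow_mul (volume.restrict Q₀) hq1
      (fun x => (‖ncomm n α b f x‖₊ : ℝ≥0∞))) ?_
    refine mul_le_mul' ?_ (le_of_eq (by rw [Measure.restrict_apply_univ]))
    rw [eLpNorm_eq_lintegral_rpow_enorm_toReal hqne0 ofReal_ne_top, ENNReal.toReal_ofReal hqpos.le]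
    exact ENNReal.rpow_le_rpow (setLIntegral_le_lintegral _ _) (by positivity)
  have hchain : (∫⁻ x in Q₀, (‖ncomm n α b f x‖₊ : ℝ≥0∞))
      ≤ K * volume Q₀ ^ (1/p) * volume Q₀ ^ (1 - 1/q) := by
    refine le_trans hHolder (mul_le_mul' ?_ le_rfl)
    rw [← hfnorm]
    exact hKQ
  calc (volume Q₀)⁻¹ * (V⁻¹ * ∫⁻ x in Q₀, (‖ncomm n α b f x‖₊ : ℝ≥0∞))
      ≤ (volume Q₀)⁻¹ * (V⁻¹ * (K * volume Q₀ ^ (1/p) * volume Q₀ ^ (1 - 1/q))) := by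
        exact mul_le_mul' le_rfl (mul_le_mul' le_rfl hchain)
    _ = K := by
        rw [← hW, ← ENNReal.rpow_neg_one (volume Q₀)]
        calc volume Q₀ ^ (-1:ℝ) * (volume Q₀ ^ (-(α/(n:ℝ)))
              * (K * volume Q₀ ^ (1/p) * volume Q₀ ^ (1 - 1/q)))
            = K * (volume Q₀ ^ (-1:ℝ) * volume Q₀ ^ (-(α/(n:ℝ)))
              * volume Q₀ ^ (1/p) * volume Q₀ ^ (1 - 1/q)) := by ring
          _ = K * volume Q₀ ^ ((-1) + (-(α/(n:ℝ))) + 1/p + (1 - 1/q)) := by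
              rw [ENNReal.rpow_add _ _ hv0 hvt, ENNReal.rpow_add _ _ hv0 hvt,
                ENNReal.rpow_add _ _ hv0 hvt]
          _ = K * volume Q₀ ^ (0:ℝ) := by
              have hz : (-1) + (-(α/(n:ℝ))) + 1/p + (1 - 1/q) = 0 := by linarith
              rw [hz]
          _ = K := by rw [ENNReal.rpow_zero, mul_one]
end
end
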